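/- arXiv:2009.12008 — 5 statements merged into one kernel-verified Lean document; each statement's English description precedes it below -/
import Mathlib

section
/- (Expander mixing lemma for irregular matrix-weighted graphs.) Let (G,W) be a matrix-weighted graph with n vertices and k×k weight matrices whose degree matrix D is invertible. Let Ã = D^{−1/2} A D^{−1/2} be the normalized adjacency matrix, with eigenvalues μ̃_1, μ̃_2, … ordered by decreasing absolute value, so that 1 = μ̃_1 = … = μ̃_k. For vertex subsets A, B define the k×k matrices vol(S) = ∑_{s∈S} D_s and V(A,B) = vol(A)·vol(V)^{−1}·vol(B). Then for all vertex subsets S and T, | tr( E(S,T) − V(S,T) ) | ≤ |μ̃_{k+1}| · √( tr(vol(S) − V(S,S)) · tr(vol(T) − V(T,T)) ). -/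
open Matrix Finset

noncomputable section

def mwAdj (n k : ℕ) (W : Fin n → Fin n → Matrix (Fin k) (Fin k) ℝ) :
    Matrix (Fin n × Fin k) (Fin n × Fin k) ℝ :=
  fun p q => W p.1 q.1 p.2 q.2

def mwDeg (n k : ℕ) (W : Fin n → Fin n → Matrix (Fin k) (Fin k) ℝ) :
    Matrix (Fin n × Fin k) (Fin n × Fin k) ℝ :=
  fun p q => if p.1 = q.1 then (∑ u, W u p.1) p.2 q.2 else 0

def mwLap (n k : ℕ) (W : Fin n → Fin n → Matrix (Fin k) (Fin k) ℝ) :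
    Matrix (Fin n × Fin k) (Fin n × Fin k) ℝ :=
  mwDeg n k W - mwAdj n k W

def mwEdge (n k : ℕ) (W : Fin n → Fin n → Matrix (Fin k) (Fin k) ℝ)
    (S T : Finset (Fin n)) : Matrix (Fin k) (Fin k) ℝ :=
  ∑ s ∈ S, ∑ t ∈ T, W s t

def mwVol (n k : ℕ) (W : Fin n → Fin n → Matrix (Fin k) (Fin k) ℝ)
    (S : Finset (Fin n)) : Matrix (Fin k) (Fin k) ℝ :=
  ∑ s ∈ S, ∑ u, W u s

/-- The indicator matrix of a vertex subset. -/
def mwP (n k : ℕ) (S : Finset (Fin n)) : Matrix (Fin n × Fin k) (Fin k) ℝ :=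
  fun p j => if p.1 ∈ S ∧ p.2 = j then 1 else 0

lemma mwP_sum_right {n k : ℕ} (T : Finset (Fin n)) (f : Fin n × Fin k → ℝ) (j : Fin k) :
    ∑ q, f q * mwP n k T q j = ∑ t ∈ T, f (t, j) := by
  rw [Fintype.sum_prod_type]
  simp [mwP, ite_and, mul_ite, Finset.sum_ite_eq', Finset.sum_ite_mem,
    Finset.univ_inter]

lemma mwP_sum_left {n k : ℕ} (S : Finset (Fin n)) (f : Fin n × Fin k → ℝ) (i : Fin k) :
    ∑ p, mwP n k S p i * f p = ∑ s ∈ S, f (s, i) := by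
  simp_rw [mul_comm]
  exact mwP_sum_right S f i

lemma mwP_sandwich {n k : ℕ} (M : Matrix (Fin n × Fin k) (Fin n × Fin k) ℝ)
    (S T : Finset (Fin n)) (i j : Fin k) :
    ((mwP n k S)ᵀ * M * mwP n k T) i j = ∑ s ∈ S, ∑ t ∈ T, M (s, i) (t, j) := by
  rw [Matrix.mul_apply]
  simp_rw [mwP_sum_right T]
  rw [Finset.sum_comm]
  congr 1
  ext t
  rw [Matrix.mul_apply]
  simp_rw [Matrix.transpose_apply]
  exact mwP_sum_left S _ i

lemma mwP_edge {n k : ℕ} (W : Fin n → Fin n → Matrix (Fin k) (Fin k) ℝ)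
    (S T : Finset (Fin n)) :
    (mwP n k S)ᵀ * mwAdj n k W * mwP n k T = mwEdge n k W S T := by
  ext i j
  rw [mwP_sandwich]
  simp only [mwEdge, mwAdj, Matrix.sum_apply]

lemma mwP_deg {n k : ℕ} (W : Fin n → Fin n → Matrix (Fin k) (Fin k) ℝ)
    (S T : Finset (Fin n)) :
    (mwP n k S)ᵀ * mwDeg n k W * mwP n k T = mwVol n k W (S ∩ T) := by
  ext i j
  rw [mwP_sandwich]
  simp only [mwDeg, mwVol, Matrix.sum_apply]
  simp only [Finset.sum_ite_eq, Finset.sum_ite_mem, Matrix.sum_apply]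

lemma adj_mul_mwP_univ {n k : ℕ} (W : Fin n → Fin n → Matrix (Fin k) (Fin k) ℝ)
    (hsym : ∀ u v, W u v = W v u) :
    mwAdj n k W * mwP n k Finset.univ = mwDeg n k W * mwP n k Finset.univ := by
  ext p j
  rw [Matrix.mul_apply, Matrix.mul_apply]
  rw [mwP_sum_right Finset.univ (fun q => mwAdj n k W p q) j,
      mwP_sum_right Finset.univ (fun q => mwDeg n k W p q) j]
  simp only [mwAdj, mwDeg]
  rw [Finset.sum_ite_eq]
  simp only [Finset.mem_univ, if_true, Matrix.sum_apply]
  exact Finset.sum_congr rfl fun u _ => by rw [hsym]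

/-- trace of `cᵀ * M * d` as a sum of column bilinear forms. -/
lemma trace_sandwich {n k : ℕ} (c d : Matrix (Fin n × Fin k) (Fin k) ℝ)
    (M : Matrix (Fin n × Fin k) (Fin n × Fin k) ℝ) :
    (cᵀ * M * d).trace = ∑ j, (fun p => c p j) ⬝ᵥ M.mulVec (fun p => d p j) := by
  rw [Matrix.trace]
  refine Finset.sum_congr rfl fun j _ => ?_
  rw [Matrix.diag_apply, Matrix.mul_assoc, Matrix.mul_apply]
  refine Finset.sum_congr rfl fun p _ => ?_
  rw [Matrix.transpose_apply]
  rfl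

/-- Expander mixing lemma for irregular matrix-weighted graphs:
`|tr(E(S,T) - V(S,T))| ≤ |μ̃_{k+1}| √(tr(vol S - V(S,S)) tr(vol T - V(T,T)))`,
where `V(A,B) = vol(A) vol(V)⁻¹ vol(B)`.  Here `R` is the PSD square root of the
(invertible) degree matrix `D`, so `R⁻¹ A R⁻¹` is the normalized adjacency
matrix, and `mu` enumerates its eigenvalues in order of decreasing absolute
value (0-indexed), with `μ̃_1 = ⋯ = μ̃_k = 1`, witnessed by an orthogonal
spectral decomposition. -/
theorem matrix_weighted_expander_mixing_irregular
    (n k : ℕ) (hn : 2 ≤ n) (G : SimpleGraph (Fin n))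
    (W : Fin n → Fin n → Matrix (Fin k) (Fin k) ℝ)
    (hpsd : ∀ u v, (W u v).PosSemidef)
    (hsym : ∀ u v, W u v = W v u)
    (h0 : ∀ u v, ¬ G.Adj u v → W u v = 0)
    (hDinv : IsUnit (mwDeg n k W).det)
    (R : Matrix (Fin n × Fin k) (Fin n × Fin k) ℝ)
    (hRpsd : R.PosSemidef) (hRsq : R * R = mwDeg n k W)
    (mu : ℕ → ℝ) (hmu : AntitoneOn (fun i => |mu i|) (Set.Iio (n * k)))
    (htop : ∀ i < k, mu i = 1)
    (U : Matrix (Fin n × Fin k) (Fin n × Fin k) ℝ) (hU : U * Uᵀ = 1)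
    (hnormAdj : R⁻¹ * mwAdj n k W * R⁻¹ =
      U * Matrix.diagonal (fun p => mu (finProdFinEquiv p)) * Uᵀ)
    (S T : Finset (Fin n)) :
    |(mwEdge n k W S T -
        mwVol n k W S * (mwVol n k W Finset.univ)⁻¹ * mwVol n k W T).trace| ≤
      |mu k| *
        Real.sqrt
          ((mwVol n k W S -
              mwVol n k W S * (mwVol n k W Finset.univ)⁻¹ * mwVol n k W S).trace *
            (mwVol n k W T -
              mwVol n k W T * (mwVol n k W Finset.univ)⁻¹ * mwVol n k W T).trace) := by
  classical
  rcases Nat.eq_zero_or_pos k with hk0 | hk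
  · subst hk0
    simp [Matrix.trace]
  -- basic facts about R
  have hRdet : IsUnit R.det := by
    have h1 : IsUnit (R.det * R.det) := by
      rw [← Matrix.det_mul, hRsq]; exact hDinv
    exact isUnit_of_mul_isUnit_left h1
  have hRiR : R⁻¹ * R = 1 := Matrix.nonsing_inv_mul R hRdet
  have hRRi : R * R⁻¹ = 1 := Matrix.mul_nonsing_inv R hRdet
  have hRsymm : Rᵀ = R := Matrix.IsSymm.eq (by simpa using hRpsd.isHermitian)
  obtain ⟨x, hx⟩ : ∃ M, M = R * mwP n k S := ⟨_, rfl⟩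
  obtain ⟨y, hy⟩ : ∃ M, M = R * mwP n k T := ⟨_, rfl⟩
  obtain ⟨z, hz⟩ : ∃ M, M = R * mwP n k Finset.univ := ⟨_, rfl⟩
  -- Gram identity
  have hgram : ∀ S' T' : Finset (Fin n),
      (R * mwP n k S')ᵀ * (R * mwP n k T') = mwVol n k W (S' ∩ T') := by
    intro S' T'
    rw [Matrix.transpose_mul, hRsymm, Matrix.mul_assoc,
      ← Matrix.mul_assoc R R (mwP n k T'), hRsq, ← Matrix.mul_assoc, mwP_deg]
  obtain ⟨Vo, hVo⟩ : ∃ M, M = mwVol n k W Finset.univ := ⟨_, rfl⟩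
  rw [← hVo]
  have hzz : zᵀ * z = Vo := by
    rw [hz, hgram, Finset.univ_inter, hVo]
  -- invertibility of Vo
  have hRinj : ∀ w : Fin n × Fin k → ℝ, R.mulVec w = 0 → w = 0 := by
    intro w hw
    have h1 : (R⁻¹ * R).mulVec w = R⁻¹.mulVec (R.mulVec w) := (Matrix.mulVec_mulVec w R⁻¹ R).symm
    rw [hRiR, Matrix.one_mulVec, hw, Matrix.mulVec_zero] at h1
    exact h1
  have hzinj : ∀ c : Fin k → ℝ, z.mulVec c = 0 → c = 0 := by
    intro c hc
    have h1 : (mwP n k Finset.univ).mulVec c = 0 := by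
      apply hRinj
      rw [Matrix.mulVec_mulVec, ← hz]
      exact hc
    ext i
    have h2 := congrFun h1 (⟨0, by omega⟩, i)
    simpa [mwP, Matrix.mulVec, dotProduct] using h2
  have hVodet : IsUnit Vo.det := by
    rw [isUnit_iff_ne_zero]
    intro hdet
    obtain ⟨v, hv0, hv⟩ := Matrix.exists_mulVec_eq_zero_iff.mpr hdet
    apply hv0
    have h1 : v ⬝ᵥ Vo.mulVec v = 0 := by rw [hv, dotProduct_zero]
    rw [← hzz, ← Matrix.mulVec_mulVec, Matrix.dotProduct_mulVec,
      Matrix.vecMul_transpose] at h1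
    exact hzinj v (dotProduct_self_eq_zero.mp h1)
  have hVoVi : Vo * Vo⁻¹ = 1 := Matrix.mul_nonsing_inv Vo hVodet
  have hViVo : Vo⁻¹ * Vo = 1 := Matrix.nonsing_inv_mul Vo hVodet
  have hVosym : Voᵀ = Vo := by
    rw [← hzz, Matrix.transpose_mul, Matrix.transpose_transpose]
  have hVisym : (Vo⁻¹)ᵀ = Vo⁻¹ := by
    rw [Matrix.transpose_nonsing_inv, hVosym]
  -- the projection
  obtain ⟨PP, hPidef⟩ : ∃ M, M = z * Vo⁻¹ * zᵀ := ⟨_, rfl⟩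
  have hPiT : PPᵀ = PP := by
    calc PPᵀ = (z * Vo⁻¹ * zᵀ)ᵀ := by rw [hPidef]
      _ = zᵀᵀ * (z * Vo⁻¹)ᵀ := Matrix.transpose_mul (z * Vo⁻¹) zᵀ
      _ = zᵀᵀ * (Vo⁻¹ᵀ * zᵀ) := by rw [Matrix.transpose_mul z Vo⁻¹]
      _ = z * (Vo⁻¹ * zᵀ) := by rw [Matrix.transpose_transpose, hVisym]
      _ = PP := by rw [hPidef, Matrix.mul_assoc]
  have hzPi : zᵀ * PP = zᵀ := by
    calc zᵀ * PP = zᵀ * z * Vo⁻¹ * zᵀ := by rw [hPidef]; simp only [Matrix.mul_assoc]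
      _ = zᵀ := by rw [hzz, hVoVi, Matrix.one_mul]
  have hPiz : PP * z = z := by
    calc PP * z = z * Vo⁻¹ * (zᵀ * z) := by rw [hPidef]; simp only [Matrix.mul_assoc]
      _ = z := by rw [hzz, Matrix.mul_assoc, hViVo, Matrix.mul_one]
  have hPiPi : PP * PP = PP := by
    nth_rewrite 1 [hPidef]
    rw [Matrix.mul_assoc (z * Vo⁻¹) zᵀ PP, hzPi]
    exact hPidef.symm
  obtain ⟨dd, hdd⟩ : ∃ d : Fin n × Fin k → ℝ, d = fun p => mu (finProdFinEquiv p) := ⟨_, rfl⟩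
  obtain ⟨N, hNdef⟩ : ∃ M, M = U * Matrix.diagonal dd * Uᵀ := ⟨_, rfl⟩
  have hNA : R⁻¹ * mwAdj n k W * R⁻¹ = N := by rw [hNdef, hdd]; exact hnormAdj
  have hNz : N * z = z := by
    calc N * z = (R⁻¹ * mwAdj n k W * R⁻¹) * (R * mwP n k Finset.univ) := by rw [hNA, hz]
      _ = R⁻¹ * (mwAdj n k W * ((R⁻¹ * R) * mwP n k Finset.univ)) := by
          simp only [Matrix.mul_assoc]
      _ = R⁻¹ * (mwDeg n k W * mwP n k Finset.univ) := by
          rw [hRiR, Matrix.one_mul, adj_mul_mwP_univ W hsym]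
      _ = R⁻¹ * R * (R * mwP n k Finset.univ) := by
          rw [← hRsq]; simp only [Matrix.mul_assoc]
      _ = z := by rw [hRiR, Matrix.one_mul, hz]
  have hNsym : Nᵀ = N := by
    calc Nᵀ = (U * Matrix.diagonal dd * Uᵀ)ᵀ := by rw [hNdef]
      _ = Uᵀᵀ * (U * Matrix.diagonal dd)ᵀ := Matrix.transpose_mul (U * Matrix.diagonal dd) Uᵀ
      _ = Uᵀᵀ * ((Matrix.diagonal dd)ᵀ * Uᵀ) := by rw [Matrix.transpose_mul U (Matrix.diagonal dd)]
      _ = U * (Matrix.diagonal dd * Uᵀ) := by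
          rw [Matrix.transpose_transpose, Matrix.diagonal_transpose]
      _ = N := by rw [hNdef, Matrix.mul_assoc]
  have hzN : zᵀ * N = zᵀ := by
    have h1 := congrArg Matrix.transpose hNz
    rw [Matrix.transpose_mul N z, hNsym] at h1
    exact h1
  have hNPi : N * PP = PP := by
    nth_rewrite 1 [hPidef]
    calc N * (z * Vo⁻¹ * zᵀ) = N * z * (Vo⁻¹ * zᵀ) := by simp only [Matrix.mul_assoc]
      _ = PP := by rw [hNz, hPidef, Matrix.mul_assoc]
  have hPiN : PP * N = PP := by
    nth_rewrite 1 [hPidef]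
    calc z * Vo⁻¹ * zᵀ * N = z * Vo⁻¹ * (zᵀ * N) := by rw [Matrix.mul_assoc (z * Vo⁻¹) zᵀ N]
      _ = PP := by rw [hzN, hPidef]
  obtain ⟨Q, hQdef⟩ : ∃ M : Matrix (Fin n × Fin k) (Fin n × Fin k) ℝ, M = 1 - PP := ⟨_, rfl⟩
  have hQT : Qᵀ = Q := by
    rw [hQdef, Matrix.transpose_sub, Matrix.transpose_one, hPiT]
  have hQNQ : Q * N * Q = N - PP := by
    rw [hQdef, Matrix.sub_mul, Matrix.one_mul, hPiN, Matrix.mul_sub, Matrix.mul_one,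
      Matrix.sub_mul, hNPi, hPiPi, sub_self, sub_zero]
  have hQQ : Q * Q = Q := by
    rw [hQdef, Matrix.mul_sub, Matrix.mul_one, Matrix.sub_mul, Matrix.one_mul, hPiPi,
      sub_self, sub_zero]
  obtain ⟨a, ha⟩ : ∃ M, M = Q * x := ⟨_, rfl⟩
  obtain ⟨b, hb⟩ : ∃ M, M = Q * y := ⟨_, rfl⟩
  have hzQ : zᵀ * Q = 0 := by
    rw [hQdef, Matrix.mul_sub, Matrix.mul_one, hzPi, sub_self]
  have hza : zᵀ * a = 0 := by rw [ha, ← Matrix.mul_assoc, hzQ, Matrix.zero_mul]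
  have hzb : zᵀ * b = 0 := by rw [hb, ← Matrix.mul_assoc, hzQ, Matrix.zero_mul]
  -- conjugation identity
  have hconj : ∀ (M : Matrix (Fin n × Fin k) (Fin n × Fin k) ℝ) (S' T' : Finset (Fin n)),
      (R * mwP n k S')ᵀ * (R⁻¹ * M * R⁻¹) * (R * mwP n k T') =
        (mwP n k S')ᵀ * M * (mwP n k T') := by
    intro M S' T'
    rw [Matrix.transpose_mul, hRsymm]
    simp only [Matrix.mul_assoc]
    rw [← Matrix.mul_assoc R⁻¹ R (mwP n k T'), hRiR, Matrix.one_mul,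
      ← Matrix.mul_assoc R R⁻¹ (M * mwP n k T'), hRRi, Matrix.one_mul,
      ← Matrix.mul_assoc]
  have hxNy : xᵀ * N * y = mwEdge n k W S T := by
    rw [hx, hy, ← hNA, hconj, mwP_edge]
  have hPiPair : ∀ S' T' : Finset (Fin n),
      (R * mwP n k S')ᵀ * PP * (R * mwP n k T') =
        mwVol n k W S' * Vo⁻¹ * mwVol n k W T' := by
    intro S' T'
    calc (R * mwP n k S')ᵀ * PP * (R * mwP n k T')
        = ((R * mwP n k S')ᵀ * z) * Vo⁻¹ * (zᵀ * (R * mwP n k T')) := by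
          rw [hPidef]; simp only [Matrix.mul_assoc]
      _ = mwVol n k W S' * Vo⁻¹ * mwVol n k W T' := by
          rw [hz, hgram, hgram, Finset.inter_univ, Finset.univ_inter]
  -- the three matrix identities
  have hmatST : mwEdge n k W S T - mwVol n k W S * Vo⁻¹ * mwVol n k W T = aᵀ * N * b := by
    refine Eq.symm ?_
    calc aᵀ * N * b = xᵀ * (Q * (N * (Q * y))) := by
          rw [ha, hb, Matrix.transpose_mul, hQT]; simp only [Matrix.mul_assoc]
      _ = xᵀ * (Q * N * Q) * y := by simp only [Matrix.mul_assoc]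
      _ = xᵀ * (N - PP) * y := by rw [hQNQ]
      _ = xᵀ * N * y - xᵀ * PP * y := by rw [Matrix.mul_sub, Matrix.sub_mul]
      _ = mwEdge n k W S T - mwVol n k W S * Vo⁻¹ * mwVol n k W T := by
          rw [hxNy, hx, hy, hPiPair]
  have hmatS : mwVol n k W S - mwVol n k W S * Vo⁻¹ * mwVol n k W S = aᵀ * (1 : Matrix (Fin n × Fin k) (Fin n × Fin k) ℝ) * a := by
    refine Eq.symm ?_
    calc aᵀ * (1 : Matrix (Fin n × Fin k) (Fin n × Fin k) ℝ) * a = xᵀ * (Q * (Q * x)) := by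
          rw [Matrix.mul_one, ha, Matrix.transpose_mul, hQT]; simp only [Matrix.mul_assoc]
      _ = xᵀ * (Q * x) := by rw [← Matrix.mul_assoc Q Q x, hQQ]
      _ = xᵀ * x - xᵀ * PP * x := by
          rw [hQdef, Matrix.sub_mul, Matrix.one_mul, Matrix.mul_sub,
            ← Matrix.mul_assoc xᵀ PP x]
      _ = mwVol n k W S - mwVol n k W S * Vo⁻¹ * mwVol n k W S := by
          rw [hx, hgram, Finset.inter_self, hPiPair]
  have hmatT : mwVol n k W T - mwVol n k W T * Vo⁻¹ * mwVol n k W T = bᵀ * (1 : Matrix (Fin n × Fin k) (Fin n × Fin k) ℝ) * b := by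
    refine Eq.symm ?_
    calc bᵀ * (1 : Matrix (Fin n × Fin k) (Fin n × Fin k) ℝ) * b = yᵀ * (Q * (Q * y)) := by
          rw [Matrix.mul_one, hb, Matrix.transpose_mul, hQT]; simp only [Matrix.mul_assoc]
      _ = yᵀ * (Q * y) := by rw [← Matrix.mul_assoc Q Q y, hQQ]
      _ = yᵀ * y - yᵀ * PP * y := by
          rw [hQdef, Matrix.sub_mul, Matrix.one_mul, Matrix.mul_sub,
            ← Matrix.mul_assoc yᵀ PP y]
      _ = mwVol n k W T - mwVol n k W T * Vo⁻¹ * mwVol n k W T := by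
          rw [hy, hgram, Finset.inter_self, hPiPair]
  -- spectral machinery
  have hUtU : Uᵀ * U = 1 := mul_eq_one_comm.mp hU
  have halpha : ¬ (1 ≤ |mu k|) → ∀ u : Fin n × Fin k → ℝ, zᵀ.mulVec u = 0 →
      ∀ p : Fin n × Fin k, ((finProdFinEquiv p : ℕ)) < k → Uᵀ.mulVec u p = 0 := by
    intro hbig u hu p hp
    have hsmall : |mu k| < 1 := not_le.mp hbig
    have hknk : k ≤ n * k := Nat.le_mul_of_pos_left k (by omega)
    obtain ⟨zcol, hzcol⟩ : ∃ f : Fin k → (Fin n × Fin k → ℝ), f = fun j q => z q j := ⟨_, rfl⟩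
    obtain ⟨ucol, hucol⟩ : ∃ f : (Fin n × Fin k) → (Fin n × Fin k → ℝ),
        f = fun q q' => U q' q := ⟨_, rfl⟩
    obtain ⟨qk, hqk⟩ : ∃ f : Fin k → Fin n × Fin k,
        f = fun (i : Fin k) => finProdFinEquiv.symm ⟨(i : ℕ), lt_of_lt_of_le (Fin.is_lt i) hknk⟩ := ⟨_, rfl⟩
    have hucolK : ∀ q : Fin n × Fin k, ((finProdFinEquiv q : ℕ)) < k →
        ucol q ∈ Submodule.span ℝ (Set.range (fun i => ucol (qk i))) := by
      intro q hq
      have hqEq : qk ⟨(finProdFinEquiv q : ℕ), hq⟩ = q := by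
        rw [hqk]
        simp only [Fin.eta]
        exact Equiv.symm_apply_apply _ _
      exact hqEq ▸ Submodule.subset_span ⟨⟨(finProdFinEquiv q : ℕ), hq⟩, rfl⟩
    -- eigen-relation for columns of z
    have hNzcol : ∀ j, N.mulVec (zcol j) = zcol j := by
      intro j; ext q
      have h1 := congrFun (congrFun hNz q) j
      simpa [Matrix.mul_apply, Matrix.mulVec, dotProduct, hzcol] using h1
    have hUcolrep : ∀ w : Fin n × Fin k → ℝ, U.mulVec (Uᵀ.mulVec w) = w := by
      intro w
      rw [Matrix.mulVec_mulVec, hU, Matrix.one_mulVec]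
    have hwcol : ∀ j q, k ≤ ((finProdFinEquiv q : ℕ)) → Uᵀ.mulVec (zcol j) q = 0 := by
      intro j q hq
      have hdiagfix : (Matrix.diagonal dd).mulVec (Uᵀ.mulVec (zcol j)) = Uᵀ.mulVec (zcol j) := by
        have h1 : Uᵀ.mulVec (N.mulVec (zcol j)) = Uᵀ.mulVec (zcol j) := by rw [hNzcol]
        have h2 : Uᵀ.mulVec (N.mulVec (zcol j)) =
            (Matrix.diagonal dd).mulVec (Uᵀ.mulVec (zcol j)) := by
          rw [hNdef, Matrix.mulVec_mulVec, ← Matrix.mul_assoc, ← Matrix.mul_assoc, hUtU,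
            Matrix.one_mul, ← Matrix.mulVec_mulVec]
        exact h2.symm.trans h1
      have h2 := congrFun hdiagfix q
      rw [Matrix.mulVec_diagonal] at h2
      by_contra hne
      have hdd1 : dd q = 1 := mul_right_cancel₀ hne (h2.trans (one_mul _).symm)
      have hle : |dd q| ≤ |mu k| := by
        rw [hdd]
        exact hmu (Set.mem_Iio.mpr (lt_of_le_of_lt hq (finProdFinEquiv q).isLt))
          (Set.mem_Iio.mpr (finProdFinEquiv q).isLt) hq
      rw [hdd1] at hle
      simp at hle
      linarith
    have hzcolK : ∀ j, zcol j ∈ Submodule.span ℝ (Set.range (fun i => ucol (qk i))) := by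
      intro j
      have hrepr : zcol j = ∑ q, (Uᵀ.mulVec (zcol j)) q • ucol q := by
        ext q'
        conv_lhs => rw [← hUcolrep (zcol j)]
        simp only [Matrix.mulVec, dotProduct, Finset.sum_apply, Pi.smul_apply, smul_eq_mul,
          hucol]
        exact Finset.sum_congr rfl fun q _ => mul_comm _ _
      rw [hrepr]
      refine Submodule.sum_mem _ fun q _ => ?_
      rcases lt_or_ge ((finProdFinEquiv q : ℕ)) k with h | h
      · exact Submodule.smul_mem _ _ (hucolK q h)
      · rw [hwcol j q h, zero_smul]
        exact Submodule.zero_mem _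
    have hzli : LinearIndependent ℝ zcol := by
      rw [Fintype.linearIndependent_iff]
      intro g hg i
      have hzg : z.mulVec g = 0 := by
        ext q
        have h1 := congrFun hg q
        simpa [Matrix.mulVec, dotProduct, hzcol, Finset.sum_apply, mul_comm] using h1
      have hVog : Vo.mulVec g = 0 := by
        rw [← hzz, ← Matrix.mulVec_mulVec, hzg, Matrix.mulVec_zero]
      have hg0 : g = 0 := by
        have h1 := congrArg (fun w => Vo⁻¹.mulVec w) hVog
        simpa [Matrix.mulVec_mulVec, hViVo, Matrix.one_mulVec, Matrix.mulVec_zero] using h1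
      exact congrFun hg0 i
    have hspan : Submodule.span ℝ (Set.range zcol) =
        Submodule.span ℝ (Set.range (fun i => ucol (qk i))) := by
      apply Submodule.eq_of_le_of_finrank_le
      · rw [Submodule.span_le]
        rintro _ ⟨j, rfl⟩
        exact hzcolK j
      · have h1 : Module.finrank ℝ (Submodule.span ℝ (Set.range zcol)) = k := by
          rw [finrank_span_eq_card hzli, Fintype.card_fin]
        have h2 : Module.finrank ℝ
            (Submodule.span ℝ (Set.range (fun i => ucol (qk i)))) ≤ k := by
          refine le_trans (finrank_span_le_card _) ?_
          rw [Set.toFinset_range]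
          exact le_trans Finset.card_image_le (by simp)
        omega
    -- orthogonality functional
    have horth : ∀ w ∈ Submodule.span ℝ (Set.range zcol), w ⬝ᵥ u = 0 := by
      have hker : Submodule.span ℝ (Set.range zcol) ≤ LinearMap.ker
          ({ toFun := fun w => w ⬝ᵥ u,
             map_add' := fun w₁ w₂ => add_dotProduct w₁ w₂ u,
             map_smul' := fun c w => smul_dotProduct c w u } :
            (Fin n × Fin k → ℝ) →ₗ[ℝ] ℝ) := by
        rw [Submodule.span_le]
        rintro _ ⟨j, rfl⟩
        have h1 := congrFun hu j
        simp only [LinearMap.mem_ker, LinearMap.coe_mk, AddHom.coe_mk, SetLike.mem_coe]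
        simpa [Matrix.mulVec, dotProduct, hzcol] using h1
      intro w hw
      exact hker hw
    have hmem : ucol p ∈ Submodule.span ℝ (Set.range zcol) := by
      rw [hspan]
      exact hucolK p hp
    have h2 := horth _ hmem
    rw [hucol] at h2
    simpa [Matrix.mulVec, dotProduct, Matrix.transpose_apply] using h2
  -- norms are preserved by Uᵀ
  have hUdot : ∀ u : Fin n × Fin k → ℝ, (Uᵀ.mulVec u) ⬝ᵥ (Uᵀ.mulVec u) = u ⬝ᵥ u := by
    intro u
    rw [Matrix.dotProduct_mulVec, Matrix.vecMul_transpose, Matrix.mulVec_mulVec, hU,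
      Matrix.one_mulVec]
  -- quadratic form expansion
  have hNquad : ∀ u v : Fin n × Fin k → ℝ,
      u ⬝ᵥ N.mulVec v = ∑ p, dd p * ((Uᵀ.mulVec u) p * (Uᵀ.mulVec v) p) := by
    intro u v
    rw [hNdef, ← Matrix.mulVec_mulVec, ← Matrix.mulVec_mulVec,
      Matrix.dotProduct_mulVec u U _, ← Matrix.mulVec_transpose]
    simp only [dotProduct, Matrix.mulVec_diagonal]
    exact Finset.sum_congr rfl fun p _ => by ring
  -- the key bound
  have hkey : ∀ u v : Fin n × Fin k → ℝ, zᵀ.mulVec u = 0 → zᵀ.mulVec v = 0 →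
      |u ⬝ᵥ N.mulVec v| ≤ |mu k| * (Real.sqrt (u ⬝ᵥ u) * Real.sqrt (v ⬝ᵥ v)) := by
    intro u v hu hv
    rw [hNquad u v, ← hUdot u, ← hUdot v]
    have hterm : ∀ p : Fin n × Fin k,
        |dd p * ((Uᵀ.mulVec u) p * (Uᵀ.mulVec v) p)| ≤
          |mu k| * |(Uᵀ.mulVec u) p * (Uᵀ.mulVec v) p| := by
      intro p
      rw [abs_mul]
      rcases lt_or_ge ((finProdFinEquiv p : ℕ)) k with hp | hp
      · by_cases hbig : 1 ≤ |mu k|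
        · have : dd p = 1 := by rw [hdd]; exact htop _ hp
          rw [this, abs_one, one_mul]
          exact le_mul_of_one_le_left (abs_nonneg _) hbig
        · rw [halpha hbig u hu p hp, zero_mul, abs_zero, mul_zero, mul_zero]
      · refine mul_le_mul_of_nonneg_right ?_ (abs_nonneg _)
        rw [hdd]
        exact hmu (Set.mem_Iio.mpr (lt_of_le_of_lt hp (finProdFinEquiv p).isLt))
          (Set.mem_Iio.mpr (finProdFinEquiv p).isLt) hp
    calc |∑ p, dd p * ((Uᵀ.mulVec u) p * (Uᵀ.mulVec v) p)|
        ≤ ∑ p, |dd p * ((Uᵀ.mulVec u) p * (Uᵀ.mulVec v) p)| :=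
          Finset.abs_sum_le_sum_abs _ _
      _ ≤ ∑ p, |mu k| * |(Uᵀ.mulVec u) p * (Uᵀ.mulVec v) p| :=
          Finset.sum_le_sum fun p _ => hterm p
      _ = |mu k| * ∑ p, |(Uᵀ.mulVec u) p| * |(Uᵀ.mulVec v) p| := by
          rw [← Finset.mul_sum]
          exact congrArg _ (Finset.sum_congr rfl fun p _ => abs_mul _ _)
      _ ≤ |mu k| * (Real.sqrt ((Uᵀ.mulVec u) ⬝ᵥ (Uᵀ.mulVec u)) *
            Real.sqrt ((Uᵀ.mulVec v) ⬝ᵥ (Uᵀ.mulVec v))) := by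
          refine mul_le_mul_of_nonneg_left ?_ (abs_nonneg _)
          have hAnn : (0:ℝ) ≤ (Uᵀ.mulVec u) ⬝ᵥ (Uᵀ.mulVec u) :=
            Finset.sum_nonneg fun q _ => mul_self_nonneg _
          have hBnn : (0:ℝ) ≤ (Uᵀ.mulVec v) ⬝ᵥ (Uᵀ.mulVec v) :=
            Finset.sum_nonneg fun q _ => mul_self_nonneg _
          rw [← Real.sqrt_mul hAnn]
          rw [Real.le_sqrt (Finset.sum_nonneg fun q _ =>
            mul_nonneg (abs_nonneg _) (abs_nonneg _)) (mul_nonneg hAnn hBnn)]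
          calc (∑ p, |(Uᵀ.mulVec u) p| * |(Uᵀ.mulVec v) p|) ^ 2
              ≤ (∑ p, |(Uᵀ.mulVec u) p| ^ 2) * (∑ p, |(Uᵀ.mulVec v) p| ^ 2) :=
                Finset.sum_mul_sq_le_sq_mul_sq _ _ _
            _ = ((Uᵀ.mulVec u) ⬝ᵥ (Uᵀ.mulVec u)) * ((Uᵀ.mulVec v) ⬝ᵥ (Uᵀ.mulVec v)) := by
                congr 1 <;>
                  exact Finset.sum_congr rfl fun p _ => by rw [sq_abs, sq]
  -- columns of a and b are orthogonal to columns of z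
  have hcola : ∀ j : Fin k, zᵀ.mulVec (fun p => a p j) = 0 := by
    intro j; ext i
    have h1 := congrFun (congrFun hza i) j
    simpa [Matrix.mul_apply, Matrix.mulVec, dotProduct] using h1
  have hcolb : ∀ j : Fin k, zᵀ.mulVec (fun p => b p j) = 0 := by
    intro j; ext i
    have h1 := congrFun (congrFun hzb i) j
    simpa [Matrix.mul_apply, Matrix.mulVec, dotProduct] using h1
  -- assemble
  rw [hmatST, hmatS, hmatT, trace_sandwich, trace_sandwich, trace_sandwich]
  simp only [Matrix.one_mulVec]
  set Aj : Fin k → ℝ := fun j => (fun p => a p j) ⬝ᵥ (fun p => a p j) with hAj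
  set Bj : Fin k → ℝ := fun j => (fun p => b p j) ⬝ᵥ (fun p => b p j) with hBj
  have hAjnn : ∀ j, 0 ≤ Aj j := fun j => Finset.sum_nonneg fun p _ => mul_self_nonneg _
  have hBjnn : ∀ j, 0 ≤ Bj j := fun j => Finset.sum_nonneg fun p _ => mul_self_nonneg _
  calc |∑ j, (fun p => a p j) ⬝ᵥ N.mulVec (fun p => b p j)|
      ≤ ∑ j, |(fun p => a p j) ⬝ᵥ N.mulVec (fun p => b p j)| :=
        Finset.abs_sum_le_sum_abs _ _
    _ ≤ ∑ j, |mu k| * (Real.sqrt (Aj j) * Real.sqrt (Bj j)) := by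
        refine Finset.sum_le_sum fun j _ => ?_
        exact hkey _ _ (hcola j) (hcolb j)
    _ = |mu k| * ∑ j, Real.sqrt (Aj j) * Real.sqrt (Bj j) := by rw [Finset.mul_sum]
    _ ≤ |mu k| * Real.sqrt ((∑ j, Aj j) * (∑ j, Bj j)) := by
        refine mul_le_mul_of_nonneg_left ?_ (abs_nonneg _)
        rw [Real.le_sqrt (Finset.sum_nonneg fun j _ =>
          mul_nonneg (Real.sqrt_nonneg _) (Real.sqrt_nonneg _))
          (mul_nonneg (Finset.sum_nonneg fun j _ => hAjnn j)
            (Finset.sum_nonneg fun j _ => hBjnn j))]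
        calc (∑ j, Real.sqrt (Aj j) * Real.sqrt (Bj j)) ^ 2
            ≤ (∑ j, Real.sqrt (Aj j) ^ 2) * (∑ j, Real.sqrt (Bj j) ^ 2) :=
              Finset.sum_mul_sq_le_sq_mul_sq _ _ _
          _ = (∑ j, Aj j) * (∑ j, Bj j) := by
              congr 1 <;> exact Finset.sum_congr rfl fun j _ => Real.sq_sqrt (by
                first | exact hAjnn j | exact hBjnn j)
end
end

section
/- Let (G,W) be a matrix-weighted graph with invertible degree matrix D, and let Ã = D^{−1/2} A D^{−1/2}. Let ψ be the kn×k block matrix whose block at vertex v is D_v^{1/2}, let ψ_S be ψ with all blocks at vertices outside S set to zero, and let ψ_S^⊥ = ψ_S − ψ·vol(V)^{−1}·vol(S), and similarly for T. Then E(S,T) − vol(S)·vol(V)^{−1}·vol(T) = (ψ_S^⊥)ᵀ Ã ψ_T^⊥. -/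
open Matrix Finset

noncomputable section

/-- The `kn × k` block matrix `ψ` whose block at vertex `v` is `Q v`
(in applications, `Q v = D_v^{1/2}`). -/
def mwPsi (n k : ℕ) (Q : Fin n → Matrix (Fin k) (Fin k) ℝ) :
    Matrix (Fin n × Fin k) (Fin k) ℝ :=
  fun p j => Q p.1 p.2 j

/-- `ψ_S`: the matrix `ψ` with all blocks at vertices outside `S` set to zero. -/
def mwPsiS (n k : ℕ) (Q : Fin n → Matrix (Fin k) (Fin k) ℝ)
    (S : Finset (Fin n)) : Matrix (Fin n × Fin k) (Fin k) ℝ :=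
  fun p j => if p.1 ∈ S then Q p.1 p.2 j else 0

/-- The `kn × kn` block diagonal matrix with diagonal blocks `Q v`
(in applications, this is `D^{1/2}`). -/
def mwBlockDiag (n k : ℕ) (Q : Fin n → Matrix (Fin k) (Fin k) ℝ) :
    Matrix (Fin n × Fin k) (Fin n × Fin k) ℝ :=
  fun p q => if p.1 = q.1 then Q p.1 p.2 q.2 else 0

/-! ### Auxiliary definitions and lemmas -/

/-- The `k × kn` "block indicator" matrix of a vertex subset `S`: the block at
vertex `v` is the identity if `v ∈ S` and zero otherwise. -/
def mwInd (n k : ℕ) (S : Finset (Fin n)) : Matrix (Fin k) (Fin n × Fin k) ℝ :=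
  fun i p => if p.1 ∈ S then (if i = p.2 then (1:ℝ) else 0) else 0

lemma real_symm_of_psd {m : Type*} [Fintype m] {A : Matrix m m ℝ}
    (h : A.PosSemidef) : Aᵀ = A := by
  rw [← conjTranspose_eq_transpose_of_trivial]
  exact h.isHermitian

lemma posDef_of_psd_det_ne_zero {m : Type*} [Fintype m] [DecidableEq m]
    {A : Matrix m m ℝ} (hA : A.PosSemidef) (h : A.det ≠ 0) : A.PosDef := by
  refine posDef_iff_dotProduct_mulVec.mpr ⟨hA.isHermitian, fun x hx => ?_⟩
  rcases (hA.dotProduct_mulVec_nonneg x).lt_or_eq with h' | h'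
  · exact h'
  · exfalso
    have hAx : A *ᵥ x = 0 := (hA.dotProduct_mulVec_zero_iff x).mp h'.symm
    apply hx
    calc x = (A⁻¹ * A) *ᵥ x := by
              rw [Matrix.nonsing_inv_mul A (isUnit_iff_ne_zero.mpr h), one_mulVec]
      _ = A⁻¹ *ᵥ (A *ᵥ x) := by rw [← mulVec_mulVec]
      _ = 0 := by rw [hAx, mulVec_zero]

lemma psiS_T_mul_blockDiag (n k : ℕ) (Q : Fin n → Matrix (Fin k) (Fin k) ℝ)
    (hQsymm : ∀ v, (Q v)ᵀ = Q v) (hQmulinv : ∀ v, Q v * (Q v)⁻¹ = 1)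
    (S : Finset (Fin n)) :
    (mwPsiS n k Q S)ᵀ * mwBlockDiag n k (fun v => (Q v)⁻¹) = mwInd n k S := by
  ext i ⟨v, j⟩
  simp only [mul_apply, transpose_apply, mwPsiS, mwBlockDiag, mwInd, Fintype.sum_prod_type]
  rw [Finset.sum_eq_single v]
  · by_cases hv : v ∈ S
    · simp only [hv, if_true, if_pos rfl]
      have h1 : ∑ x, Q v x i * (Q v)⁻¹ x j = (Q v * (Q v)⁻¹) i j := by
        rw [Matrix.mul_apply]
        refine Finset.sum_congr rfl fun l _ => ?_
        congr 1
        conv_lhs => rw [← hQsymm v]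
        rfl
      rw [h1, hQmulinv v, Matrix.one_apply]
    · simp [hv]
  · intro u _ hu
    simp [hu]
  · simp

lemma blockDiag_mul_psiS (n k : ℕ) (Q : Fin n → Matrix (Fin k) (Fin k) ℝ)
    (hQinvmul : ∀ v, (Q v)⁻¹ * Q v = 1)
    (T : Finset (Fin n)) :
    mwBlockDiag n k (fun v => (Q v)⁻¹) * mwPsiS n k Q T = (mwInd n k T)ᵀ := by
  ext ⟨v, i⟩ j
  simp only [mul_apply, transpose_apply, mwPsiS, mwBlockDiag, mwInd, Fintype.sum_prod_type]
  rw [Finset.sum_eq_single v]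
  · by_cases hv : v ∈ T
    · simp only [hv, if_true, if_pos rfl]
      rw [← Matrix.mul_apply, hQinvmul v, Matrix.one_apply]
      simp [eq_comm]
    · simp [hv]
  · intro u _ hu
    simp [Ne.symm hu]
  · simp

lemma ind_mul_adj_mul_ind (n k : ℕ) (W : Fin n → Fin n → Matrix (Fin k) (Fin k) ℝ)
    (S T : Finset (Fin n)) :
    mwInd n k S * mwAdj n k W * (mwInd n k T)ᵀ = mwEdge n k W S T := by
  ext i j
  simp only [mul_apply, transpose_apply, mwInd, mwAdj, mwEdge, Fintype.sum_prod_type,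
    Matrix.sum_apply, ite_mul, mul_ite, zero_mul, mul_zero, mul_one, one_mul,
    Finset.sum_ite_eq, Finset.sum_ite_eq', Finset.mem_univ, if_true,
    Finset.sum_ite_mem, Finset.univ_inter, Finset.sum_ite_irrel, Finset.sum_const_zero]
  exact Finset.sum_comm

/-- Key identity in the proof of the irregular expander mixing lemma: with
`ψ` the block matrix of the square roots `D_v^{1/2}` (here `Q v`, characterized
by `Q v` PSD and `Q v * Q v = D_v`), `ψ_S^⊥ = ψ_S - ψ vol(V)⁻¹ vol(S)`, and
`Ã = D^{-1/2} A D^{-1/2}` the normalized adjacency matrix,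
`E(S,T) - vol(S) vol(V)⁻¹ vol(T) = (ψ_S^⊥)ᵀ Ã ψ_T^⊥`. -/
theorem matrix_weighted_irregular_mixing_identity
    (n k : ℕ) (G : SimpleGraph (Fin n))
    (W : Fin n → Fin n → Matrix (Fin k) (Fin k) ℝ)
    (hpsd : ∀ u v, (W u v).PosSemidef)
    (hsym : ∀ u v, W u v = W v u)
    (h0 : ∀ u v, ¬ G.Adj u v → W u v = 0)
    (hDinv : IsUnit (mwDeg n k W).det)
    (Q : Fin n → Matrix (Fin k) (Fin k) ℝ)
    (hQpsd : ∀ v, (Q v).PosSemidef)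
    (hQsq : ∀ v, Q v * Q v = ∑ u, W u v)
    (S T : Finset (Fin n)) :
    mwEdge n k W S T -
        mwVol n k W S * (mwVol n k W Finset.univ)⁻¹ * mwVol n k W T =
      (mwPsiS n k Q S -
          mwPsi n k Q * (mwVol n k W Finset.univ)⁻¹ * mwVol n k W S)ᵀ *
        ((mwBlockDiag n k Q)⁻¹ * mwAdj n k W * (mwBlockDiag n k Q)⁻¹) *
        (mwPsiS n k Q T -
          mwPsi n k Q * (mwVol n k W Finset.univ)⁻¹ * mwVol n k W T) := by
  classical
  rcases Nat.eq_zero_or_pos n with hn | hn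
  · subst hn
    have hS : S = ∅ := Finset.eq_empty_of_isEmpty S
    have hT : T = ∅ := Finset.eq_empty_of_isEmpty T
    subst hS; subst hT
    ext i j
    simp [mwEdge, mwVol, Matrix.mul_apply, Matrix.sub_apply]
  · have hne : Nonempty (Fin n) := ⟨⟨0, hn⟩⟩
    obtain ⟨v0⟩ := hne
    set D : Fin n → Matrix (Fin k) (Fin k) ℝ := fun v => ∑ u, W u v with hDdef
    have hWsymm : ∀ u v, (W u v)ᵀ = W u v := fun u v => real_symm_of_psd (hpsd u v)
    have hDpsd : ∀ v, (D v).PosSemidef := fun v =>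
      Finset.sum_induction _ (fun M : Matrix (Fin k) (Fin k) ℝ => M.PosSemidef) (fun a b ha hb => ha.add hb)
        Matrix.PosSemidef.zero (fun u _ => hpsd u v)
    -- determinant of the degree matrix is the product of the block determinants
    have hdegdet : (mwDeg n k W).det = ∏ v, (D v).det := by
      have hre : mwDeg n k W = (Matrix.blockDiagonal D).submatrix
          (Equiv.prodComm (Fin n) (Fin k)) (Equiv.prodComm (Fin n) (Fin k)) := by
        ext p q
        by_cases h : p.1 = q.1 <;>
          simp [mwDeg, Matrix.blockDiagonal_apply, Matrix.submatrix_apply, h, hDdef]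
      rw [hre, Matrix.det_submatrix_equiv_self, Matrix.det_blockDiagonal]
    have hDdet : ∀ v, (D v).det ≠ 0 := by
      have hne0 : (∏ v, (D v).det) ≠ 0 := by
        rw [← hdegdet]; exact hDinv.ne_zero
      intro v hv
      exact hne0 (Finset.prod_eq_zero (Finset.mem_univ v) hv)
    have hQdet : ∀ v, (Q v).det ≠ 0 := fun v => by
      have hm : (Q v).det * (Q v).det = (D v).det := by
        rw [← Matrix.det_mul, hQsq v]
      intro h
      exact hDdet v (by rw [← hm, h, zero_mul])
    have hQsymm : ∀ v, (Q v)ᵀ = Q v := fun v => real_symm_of_psd (hQpsd v)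
    have hQunit : ∀ v, IsUnit (Q v).det := fun v => isUnit_iff_ne_zero.mpr (hQdet v)
    have hQmulinv : ∀ v, Q v * (Q v)⁻¹ = 1 := fun v => Matrix.mul_nonsing_inv _ (hQunit v)
    have hQinvmul : ∀ v, (Q v)⁻¹ * Q v = 1 := fun v => Matrix.nonsing_inv_mul _ (hQunit v)
    -- the inverse of the block diagonal matrix
    have hBDinv : (mwBlockDiag n k Q)⁻¹ = mwBlockDiag n k (fun v => (Q v)⁻¹) := by
      apply Matrix.inv_eq_right_inv
      ext ⟨v, i⟩ ⟨u, j⟩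
      simp only [Matrix.mul_apply, mwBlockDiag, Fintype.sum_prod_type, Matrix.one_apply]
      rw [Finset.sum_eq_single v]
      · by_cases hu : v = u
        · subst hu
          simp only [if_pos rfl, if_true]
          rw [← Matrix.mul_apply, hQmulinv v]
          simp [Matrix.one_apply, Prod.ext_iff]
        · simp [hu, Prod.ext_iff]
      · intro w _ hw
        simp [Ne.symm hw]
      · simp
    -- symmetry of volumes
    have hVolsymm : ∀ S' : Finset (Fin n), (mwVol n k W S')ᵀ = mwVol n k W S' := fun S' => by
      simp [mwVol, Matrix.transpose_sum, hWsymm]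
    -- the total volume is positive definite, hence invertible
    have hVU : mwVol n k W Finset.univ = D v0 + ∑ v ∈ Finset.univ.erase v0, D v := by
      rw [Finset.add_sum_erase _ _ (Finset.mem_univ v0)]
      rfl
    have hVUpd : (mwVol n k W Finset.univ).PosDef := by
      rw [hVU]
      exact (posDef_of_psd_det_ne_zero (hDpsd v0) (hDdet v0)).add_posSemidef
        (Finset.sum_induction _ (fun M : Matrix (Fin k) (Fin k) ℝ => M.PosSemidef) (fun a b ha hb => ha.add hb)
          Matrix.PosSemidef.zero (fun u _ => hDpsd u))
    have hVUdet : IsUnit (mwVol n k W Finset.univ).det :=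
      isUnit_iff_ne_zero.mpr hVUpd.det_pos.ne'
    have hVUinv : mwVol n k W Finset.univ * (mwVol n k W Finset.univ)⁻¹ = 1 :=
      Matrix.mul_nonsing_inv _ hVUdet
    have hVUinvsymm : ((mwVol n k W Finset.univ)⁻¹)ᵀ = (mwVol n k W Finset.univ)⁻¹ := by
      rw [Matrix.transpose_nonsing_inv, hVolsymm]
    have hPsiU : mwPsi n k Q = mwPsiS n k Q Finset.univ := by
      ext p j; simp [mwPsi, mwPsiS]
    -- abbreviations
    set A := mwAdj n k W with hA
    set B := mwBlockDiag n k (fun v => (Q v)⁻¹) with hB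
    set vU := mwVol n k W Finset.univ with hvU
    set vS := mwVol n k W S with hvS
    set vT := mwVol n k W T with hvT
    set IS := mwInd n k S with hIS
    set IT := mwInd n k T with hIT
    set IU := mwInd n k Finset.univ with hIU
    -- edge identities
    have hES : mwEdge n k W S Finset.univ = vS := by
      refine Finset.sum_congr rfl fun s _ => Finset.sum_congr rfl fun t _ => hsym s t
    have hET : mwEdge n k W Finset.univ T = vT := Finset.sum_comm
    have hEU : mwEdge n k W Finset.univ Finset.univ = vU := Finset.sum_comm
    -- the two boundary factors
    have hLS : (mwPsiS n k Q S - mwPsi n k Q * vU⁻¹ * vS)ᵀ * B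
        = IS - vS * (vU⁻¹ * IU) := by
      rw [Matrix.transpose_sub, Matrix.sub_mul,
        psiS_T_mul_blockDiag n k Q hQsymm hQmulinv S, hPsiU]
      congr 1
      rw [Matrix.transpose_mul, Matrix.transpose_mul, hVolsymm, hVUinvsymm]
      simp only [Matrix.mul_assoc]
      rw [psiS_T_mul_blockDiag n k Q hQsymm hQmulinv Finset.univ]
    have hRT : B * (mwPsiS n k Q T - mwPsi n k Q * vU⁻¹ * vT)
        = ITᵀ - IUᵀ * (vU⁻¹ * vT) := by
      rw [Matrix.mul_sub, blockDiag_mul_psiS n k Q hQinvmul T, hPsiU]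
      congr 1
      simp only [← Matrix.mul_assoc]
      rw [blockDiag_mul_psiS n k Q hQinvmul Finset.univ, Matrix.mul_assoc]
    -- rewrite the right hand side
    rw [hBDinv]
    have hassoc : ∀ (X Y : Matrix (Fin n × Fin k) (Fin k) ℝ),
        Xᵀ * (B * A * B) * Y = (Xᵀ * B) * A * (B * Y) := fun X Y => by
      simp only [Matrix.mul_assoc]
    rw [hassoc, hLS, hRT]
    -- expand
    have e1 : IS * A * ITᵀ = mwEdge n k W S T := ind_mul_adj_mul_ind n k W S T
    have e2 : IS * A * (IUᵀ * (vU⁻¹ * vT)) = vS * (vU⁻¹ * vT) := by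
      rw [← Matrix.mul_assoc, ind_mul_adj_mul_ind n k W S Finset.univ, hES]
    have e3 : vS * (vU⁻¹ * IU) * A * ITᵀ = vS * (vU⁻¹ * vT) := by
      simp only [Matrix.mul_assoc]
      rw [← Matrix.mul_assoc IU A (ITᵀ), hIU, hIT, hA,
        ind_mul_adj_mul_ind n k W Finset.univ T, hET]
    have e4 : vS * (vU⁻¹ * IU) * A * (IUᵀ * (vU⁻¹ * vT)) = vS * (vU⁻¹ * vT) := by
      simp only [Matrix.mul_assoc]
      rw [← Matrix.mul_assoc A (IUᵀ) (vU⁻¹ * vT), ← Matrix.mul_assoc IU (A * IUᵀ) (vU⁻¹ * vT),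
        ← Matrix.mul_assoc IU A (IUᵀ), hIU, hA,
        ind_mul_adj_mul_ind n k W Finset.univ Finset.univ, hEU,
        ← Matrix.mul_assoc vU vU⁻¹ vT, hVUinv, Matrix.one_mul]
    rw [Matrix.sub_mul, Matrix.sub_mul, Matrix.mul_sub, Matrix.mul_sub, e1, e2, e3, e4]
    rw [Matrix.mul_assoc vS vU⁻¹ vT]
    abel
end
end

section
/- (Cheeger-type lower bound, trace form.) Let (G,W) be a d-regular matrix-weighted graph with k×k weight matrices and d > 0, with Laplacian eigenvalues 0 = λ_1 = … = λ_k ≤ λ_{k+1} ≤ … ≤ λ_{nk}. Then for every vertex subset S with ∅ ≠ S ≠ V, the trace Cheeger ratio h^tr(S) = tr(E(S, V∖S)) / (d · min(|S|, |V∖S|)) satisfies h^tr(S) ≥ (1/(2d)) ∑_{i=1}^{k} λ_{k+i}; in particular the trace Cheeger constant h^tr_G = min_S h^tr(S) satisfies h^tr_G ≥ (1/(2d)) ∑_{i=1}^{k} λ_{k+i}. -/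
open Matrix Finset

noncomputable section

lemma myDiagNonneg {N : Type*} [Fintype N] [DecidableEq N] {A : Matrix N N ℝ}
    (h : A.PosSemidef) (i : N) : 0 ≤ A i i := by
  exact h.diag_nonneg

lemma mySelect (N k : ℕ) (hk : 2 * k ≤ N) (lam : ℕ → ℝ) (hlam : MonotoneOn lam (Set.Iio N))
    (t : ℕ → ℝ) (ht0 : ∀ i < N, 0 ≤ t i) (ht1 : ∀ i < N, t i ≤ 1)
    (hsum : ∑ i ∈ range N, t i = 2 * k) (hkpos : 0 < k) :
    ∑ i ∈ range (2*k), lam i ≤ ∑ i ∈ range N, lam i * t i := by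
  have h2k : 2*k - 1 < N := by omega
  set c : ℕ → ℝ := fun i => if i < 2*k then 1 else 0 with hc
  have hsub : range (2*k) ⊆ range N := Finset.range_subset_range.2 hk
  have hcs : ∀ (g : ℕ → ℝ), ∑ i ∈ range N, g i * c i = ∑ i ∈ range (2*k), g i := by
    intro g
    rw [← Finset.sum_subset hsub (fun x _ hnx => ?_)]
    · exact Finset.sum_congr rfl fun x hx => by
        simp [hc, Finset.mem_range.1 hx]
    · simp only [hc, Finset.mem_range] at hnx ⊢
      simp [hnx]
  have key : ∀ i ∈ range N, lam (2*k-1) * (t i - c i) ≤ lam i * (t i - c i) := by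
    intro i hi
    simp only [mem_range] at hi
    by_cases h : i < 2*k
    · have h1 : c i = 1 := by simp [hc, h]
      have hle : lam i ≤ lam (2*k-1) := hlam hi h2k (by omega)
      rw [h1]; nlinarith [ht1 i hi]
    · have h1 : c i = 0 := by simp [hc, h]
      have hle : lam (2*k-1) ≤ lam i := hlam h2k hi (by omega)
      rw [h1]; nlinarith [ht0 i hi]
  have h1 : ∑ i ∈ range N, lam (2*k-1) * (t i - c i) ≤ ∑ i ∈ range N, lam i * (t i - c i) :=
    Finset.sum_le_sum key
  have hcsum : ∑ i ∈ range N, c i = 2*k := by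
    have := hcs (fun _ => 1)
    simpa using this
  have h2 : ∑ i ∈ range N, lam (2*k-1) * (t i - c i) = 0 := by
    rw [← Finset.mul_sum, Finset.sum_sub_distrib, hsum, hcsum]; ring
  have h3 : ∑ i ∈ range N, lam i * (t i - c i)
      = ∑ i ∈ range N, lam i * t i - ∑ i ∈ range (2*k), lam i := by
    rw [← hcs lam, ← Finset.sum_sub_distrib]
    exact Finset.sum_congr rfl fun x _ => by ring
  rw [h2, h3] at h1
  linarith

section MkFacts

variable (n k : ℕ)

/-- column-selection matrix built from a vector `a`. -/
def myMk (a : Fin n → ℝ) : Matrix (Fin n × Fin k) (Fin k) ℝ :=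
  Matrix.of (fun (p : Fin n × Fin k) (j : Fin k) => a p.1 * (if p.2 = j then 1 else 0))

lemma myMk_mul (a b : Fin n → ℝ) :
    (myMk n k a)ᵀ * (myMk n k b) = (∑ u, a u * b u) • (1 : Matrix (Fin k) (Fin k) ℝ) := by
  ext j j'
  simp only [myMk, Matrix.mul_apply, Matrix.transpose_apply, Matrix.of_apply,
    Fintype.sum_prod_type]
  have h1 : ∀ (u : Fin n) (i : Fin k),
      (a u * (if i = j then (1:ℝ) else 0)) * (b u * (if i = j' then 1 else 0))
      = if i = j then (if i = j' then a u * b u else 0) else 0 := by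
    intro u i; rcases eq_or_ne i j with h|h <;> rcases eq_or_ne i j' with h2|h2 <;>
      simp [h, h2]
  simp only [h1, Finset.sum_ite_eq', Finset.mem_univ, if_true]
  rcases eq_or_ne j j' with h|h
  · simp [h, Matrix.one_apply]
  · simp [h, Matrix.one_apply]

lemma myLap_mul_Y (W : Fin n → Fin n → Matrix (Fin k) (Fin k) ℝ)
    (hsym : ∀ u v, W u v = W v u) :
    mwLap n k W * myMk n k (fun _ => 1) = 0 := by
  ext p j
  simp only [myMk, Matrix.mul_apply, Matrix.of_apply, Fintype.sum_prod_type, mwLap, mwDeg, mwAdj,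
    Matrix.sub_apply, mul_ite, mul_one, mul_zero, one_mul, Matrix.zero_apply]
  have inner : ∀ x : Fin n, (∑ i : Fin k, if i = j then
        ((if p.1 = x then (∑ u, W u p.1) p.2 i else 0) - W p.1 x p.2 i) else 0)
      = ((if p.1 = x then (∑ u, W u p.1) p.2 j else 0) - W p.1 x p.2 j) := fun x => by
    rw [Finset.sum_ite_eq']; simp
  simp only [inner, Finset.sum_sub_distrib, Finset.sum_ite_eq, Finset.mem_univ, if_true]
  rw [sub_eq_zero]
  have h2 : ∀ x, W p.1 x p.2 j = W x p.1 p.2 j := fun x => by rw [hsym]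
  simp only [h2, Matrix.sum_apply]

lemma myY_mul_Lap (W : Fin n → Fin n → Matrix (Fin k) (Fin k) ℝ) :
    (myMk n k (fun _ => 1))ᵀ * mwLap n k W = 0 := by
  ext j q
  simp only [myMk, Matrix.mul_apply, Matrix.transpose_apply, Matrix.of_apply,
    Fintype.sum_prod_type, mwLap, mwDeg, mwAdj, Matrix.sub_apply, ite_mul, one_mul, zero_mul,
    Matrix.zero_apply]
  have inner : ∀ x : Fin n, (∑ i : Fin k, if i = j then
        ((if x = q.1 then (∑ u, W u x) i q.2 else 0) - W x q.1 i q.2) else 0)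
      = ((if x = q.1 then (∑ u, W u x) j q.2 else 0) - W x q.1 j q.2) := fun x => by
    rw [Finset.sum_ite_eq']; simp
  simp only [inner, Finset.sum_sub_distrib, Finset.sum_ite_eq', Finset.mem_univ, if_true]
  rw [sub_eq_zero]
  simp only [Matrix.sum_apply]

lemma myXLX (d : ℝ) (W : Fin n → Fin n → Matrix (Fin k) (Fin k) ℝ)
    (hreg : ∀ v : Fin n, ∑ u, W u v = d • (1 : Matrix (Fin k) (Fin k) ℝ))
    (S : Finset (Fin n)) :
    (myMk n k (fun u => if u ∈ S then (1:ℝ) else 0))ᵀ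
      * (mwLap n k W * myMk n k (fun u => if u ∈ S then (1:ℝ) else 0))
    = (d * (S.card : ℝ)) • (1 : Matrix (Fin k) (Fin k) ℝ) - mwEdge n k W S S := by
  have hLX : mwLap n k W * myMk n k (fun u => if u ∈ S then (1:ℝ) else 0)
      = Matrix.of (fun (p : Fin n × Fin k) (j : Fin k) =>
          (if p.1 ∈ S then (1:ℝ) else 0) * (d * (if p.2 = j then 1 else 0))
            - ∑ v ∈ S, W p.1 v p.2 j) := by
    ext p j
    simp only [myMk, Matrix.mul_apply, Matrix.of_apply, Fintype.sum_prod_type, mwLap, mwDeg,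
      mwAdj, Matrix.sub_apply, mul_ite, ite_mul, mul_one, mul_zero, one_mul, zero_mul,
      Finset.sum_ite_eq', Finset.mem_univ, if_true]
    rw [Finset.sum_ite_mem, Finset.univ_inter, Finset.sum_sub_distrib]
    congr 1
    · rw [Finset.sum_ite_eq]
      rcases eq_or_ne p.2 j with h|h <;> by_cases hp : p.1 ∈ S <;>
        simp [h, hp, hreg p.1, Matrix.one_apply]
  rw [hLX]
  ext j j'
  simp only [myMk, Matrix.mul_apply, Matrix.transpose_apply, Matrix.of_apply,
    Fintype.sum_prod_type, mul_sub, mul_ite, ite_mul, mul_one, mul_zero, one_mul, zero_mul,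
    Finset.sum_ite_eq', Finset.mem_univ, if_true, Finset.sum_sub_distrib,
    Matrix.sub_apply, Matrix.smul_apply, Matrix.one_apply, smul_eq_mul]
  rw [Finset.sum_ite_mem, Finset.univ_inter]
  congr 1
  · rcases eq_or_ne j j' with h|h
    · subst h
      simp only [reduceIte]
      have h2 : ∀ x ∈ S, (if x ∈ S then d else 0) = d := fun x hx => if_pos hx
      rw [Finset.sum_congr rfl h2, Finset.sum_const, nsmul_eq_mul, mul_comm]
    · simp only [if_neg (Ne.symm h), Finset.sum_const_zero, if_neg h]
  · rw [Finset.sum_ite_mem, Finset.univ_inter, mwEdge, Matrix.sum_apply]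
    refine Finset.sum_congr rfl fun u hu => ?_
    simp [Matrix.sum_apply]

end MkFacts

set_option maxHeartbeats 1000000 in
/-- Cheeger-type lower bound, trace form: for a `d`-regular matrix-weighted graph
(`d > 0`) and every vertex subset `S` with `∅ ≠ S ≠ V`, the trace Cheeger ratio
`h^tr(S) = tr E(S, V∖S) / (d min(|S|, |V∖S|))` satisfies
`h^tr(S) ≥ (1/(2d)) ∑_{i=1}^k λ_{k+i}`; in particular the trace Cheeger constant
`h^tr_G = min_S h^tr(S)` satisfies the same bound.  Here `lam` enumerates the
Laplacian eigenvalues in increasing order (0-indexed), with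
`λ_1 = ⋯ = λ_k = 0`, witnessed by an orthogonal spectral decomposition. -/
theorem matrix_weighted_cheeger_trace_lower_bound
    (n k : ℕ) (d : ℝ) (hd : 0 < d) (G : SimpleGraph (Fin n))
    (W : Fin n → Fin n → Matrix (Fin k) (Fin k) ℝ)
    (hpsd : ∀ u v, (W u v).PosSemidef)
    (hsym : ∀ u v, W u v = W v u)
    (h0 : ∀ u v, ¬ G.Adj u v → W u v = 0)
    (hreg : ∀ v : Fin n, ∑ u, W u v = d • (1 : Matrix (Fin k) (Fin k) ℝ))
    (lam : ℕ → ℝ) (hlam : MonotoneOn lam (Set.Iio (n * k)))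
    (hzero : ∀ i < k, lam i = 0)
    (U : Matrix (Fin n × Fin k) (Fin n × Fin k) ℝ) (hU : U * Uᵀ = 1)
    (hLW : mwLap n k W =
      U * Matrix.diagonal (fun p => lam (finProdFinEquiv p)) * Uᵀ) :
    ∀ S : Finset (Fin n), S.Nonempty → S ≠ Finset.univ →
      (1 / (2 * d)) * (∑ i ∈ Finset.range k, lam (k + i)) ≤
        (mwEdge n k W S Sᶜ).trace / (d * min (S.card : ℝ) (Sᶜ.card : ℝ)) := by
  intro S hS hSne
  rcases Nat.eq_zero_or_pos k with hk0 | hkpos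
  · subst hk0
    have h1 : (mwEdge n 0 W S Sᶜ).trace = 0 := by
      simp [Matrix.trace]
    rw [h1]
    simp
  -- nonempty complement and cardinalities
  have hScne : Sᶜ.Nonempty := by
    by_contra h
    rw [Finset.not_nonempty_iff_eq_empty, Finset.compl_eq_empty_iff] at h
    exact hSne h
  set s : ℝ := (S.card : ℝ) with hs_def
  set sc : ℝ := (Sᶜ.card : ℝ) with hsc_def
  have hs1 : (1:ℝ) ≤ s := by
    rw [hs_def]; exact_mod_cast Finset.card_pos.2 hS
  have hsc1 : (1:ℝ) ≤ sc := by
    rw [hsc_def]; exact_mod_cast Finset.card_pos.2 hScne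
  have hcards : s + sc = n := by
    rw [hs_def, hsc_def]
    have h2 : S.card + Sᶜ.card = n := by
      rw [Finset.card_add_card_compl]; simp
    exact_mod_cast h2
  have hn0 : (0:ℝ) < n := by linarith
  have hnn : 2 ≤ n := by
    have h2 : (2:ℝ) ≤ (n:ℝ) := by linarith
    exact_mod_cast h2
  set m : ℝ := s * sc / n with hm_def
  have hm : 0 < m := by
    rw [hm_def]; positivity
  -- vector functions
  set χ : Fin n → ℝ := fun u => if u ∈ S then 1 else 0 with hχ_def
  set ζ : Fin n → ℝ := fun u => χ u - s / n with hζ_def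
  -- scalar sums
  have hchi_sum : ∑ u, χ u = s := by
    rw [hχ_def, hs_def]
    rw [Finset.sum_ite_mem, Finset.univ_inter, Finset.sum_const, nsmul_eq_mul, mul_one]
  have hζζ : ∑ u, ζ u * ζ u = m := by
    have h1 : ∀ u, ζ u * ζ u = χ u - (2*(s/n))*χ u + (s/n)*(s/n) := by
      intro u
      by_cases h : u ∈ S
      · simp only [hζ_def, hχ_def, if_pos h]; ring
      · simp only [hζ_def, hχ_def, if_neg h]; ring
    rw [Finset.sum_congr rfl fun u _ => h1 u]
    rw [Finset.sum_add_distrib, Finset.sum_sub_distrib, ← Finset.mul_sum, hchi_sum,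
      Finset.sum_const, Finset.card_univ, Fintype.card_fin, nsmul_eq_mul]
    rw [hm_def]
    have hscn : sc = (n:ℝ) - s := by linarith
    rw [hscn]
    field_simp
    ring
  have hζ1 : ∑ u, ζ u * 1 = 0 := by
    simp only [mul_one, hζ_def]
    rw [Finset.sum_sub_distrib, hchi_sum, Finset.sum_const, Finset.card_univ, Fintype.card_fin,
      nsmul_eq_mul]
    field_simp
    ring
  have h1ζ : ∑ u, 1 * ζ u = 0 := by
    simpa [one_mul] using (by simpa [mul_one] using hζ1 : ∑ u, ζ u = 0)
  have h11 : ∑ u : Fin n, (1:ℝ) * 1 = n := by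
    simp
  -- matrix identities
  have hZZ : (myMk n k ζ)ᵀ * (myMk n k ζ) = m • 1 := by rw [myMk_mul, hζζ]
  have hYZ : (myMk n k (fun _ => (1:ℝ)))ᵀ * (myMk n k ζ) = 0 := by
    rw [myMk_mul, h1ζ, zero_smul]
  have hZY : (myMk n k ζ)ᵀ * (myMk n k (fun _ => (1:ℝ))) = 0 := by
    rw [myMk_mul, hζ1, zero_smul]
  have hYY : (myMk n k (fun _ => (1:ℝ)))ᵀ * (myMk n k (fun _ => (1:ℝ))) = (n:ℝ) • 1 := by
    rw [myMk_mul, h11]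
  have hLY : mwLap n k W * myMk n k (fun _ => (1:ℝ)) = 0 := myLap_mul_Y n k W hsym
  have hYL : (myMk n k (fun _ => (1:ℝ)))ᵀ * mwLap n k W = 0 := myY_mul_Lap n k W
  have hXLX := myXLX n k d W hreg S
  rw [← hχ_def] at hXLX
  -- Z in terms of X and Y
  have hZX : myMk n k ζ = myMk n k χ - (s/n) • myMk n k (fun _ => (1:ℝ)) := by
    ext p j
    simp only [myMk, hζ_def, Matrix.sub_apply, Matrix.smul_apply, Matrix.of_apply, smul_eq_mul]
    ring
  have hLZ : mwLap n k W * myMk n k ζ = mwLap n k W * myMk n k χ := by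
    rw [hZX, Matrix.mul_sub, Matrix.mul_smul, hLY, smul_zero, sub_zero]
  have hYLX : (myMk n k (fun _ => (1:ℝ)))ᵀ * (mwLap n k W * myMk n k χ) = 0 := by
    rw [← Matrix.mul_assoc, hYL, Matrix.zero_mul]
  have hZLZ : (myMk n k ζ)ᵀ * (mwLap n k W * myMk n k ζ)
      = (myMk n k χ)ᵀ * (mwLap n k W * myMk n k χ) := by
    rw [hLZ, hZX, Matrix.transpose_sub, Matrix.transpose_smul, Matrix.sub_mul, Matrix.smul_mul,
      hYLX, smul_zero, sub_zero]
  -- trace of edge counts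
  have htr1 : (mwEdge n k W S S).trace + (mwEdge n k W S Sᶜ).trace = d * s * k := by
    rw [mwEdge, mwEdge, Matrix.trace_sum, Matrix.trace_sum, ← Finset.sum_add_distrib]
    have h2 : ∀ u ∈ S, (∑ t ∈ S, W u t).trace + (∑ t ∈ Sᶜ, W u t).trace = d * k := by
      intro u _
      rw [← Matrix.trace_add, Finset.sum_add_sum_compl,
        show (∑ t, W u t) = ∑ t, W t u from Finset.sum_congr rfl fun t _ => hsym u t,
        hreg u, Matrix.trace_smul, Matrix.trace_one]
      simp
    rw [Finset.sum_congr rfl h2, Finset.sum_const, nsmul_eq_mul, ← hs_def]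
    ring
  have hXtr : ((myMk n k χ)ᵀ * (mwLap n k W * myMk n k χ)).trace
      = d * s * k - (mwEdge n k W S S).trace := by
    rw [hXLX, Matrix.trace_sub, Matrix.trace_smul, Matrix.trace_one, ← hs_def]
    simp only [smul_eq_mul, Fintype.card_fin]
    try ring
  have hedge_tr : ((myMk n k ζ)ᵀ * (mwLap n k W * myMk n k ζ)).trace
      = (mwEdge n k W S Sᶜ).trace := by
    rw [hZLZ, hXtr]; linarith
  -- spectral decomposition facts
  have hUo : Uᵀ * U = 1 := mul_eq_one_comm.mp hU
  have hCt : (Uᵀ * myMk n k ζ)ᵀ = (myMk n k ζ)ᵀ * U := by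
    rw [Matrix.transpose_mul, Matrix.transpose_transpose]
  have hCCt : (myMk n k ζ)ᵀ * (mwLap n k W * myMk n k ζ)
      = (Uᵀ * myMk n k ζ)ᵀ * ((Matrix.diagonal fun p : Fin n × Fin k => lam (finProdFinEquiv p)) * (Uᵀ * myMk n k ζ)) := by
    rw [hLW, hCt]
    simp only [Matrix.mul_assoc]
  have htr_spec : ((myMk n k ζ)ᵀ * (mwLap n k W * myMk n k ζ)).trace
      = ∑ p, lam (finProdFinEquiv p) * ((Uᵀ * myMk n k ζ) * (Uᵀ * myMk n k ζ)ᵀ) p p := by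
    rw [hCCt, Matrix.trace_mul_comm ((Uᵀ * myMk n k ζ)ᵀ)
      ((Matrix.diagonal fun p : Fin n × Fin k => lam (finProdFinEquiv p)) * (Uᵀ * myMk n k ζ)), Matrix.mul_assoc]
    simp [Matrix.trace, Matrix.diag, Matrix.diagonal_mul]
  have hUL : Uᵀ * mwLap n k W = (Matrix.diagonal fun p : Fin n × Fin k => lam (finProdFinEquiv p)) * Uᵀ := by
    rw [hLW, ← Matrix.mul_assoc, ← Matrix.mul_assoc, hUo, Matrix.one_mul]
  have hLamB : (Matrix.diagonal fun p : Fin n × Fin k => lam (finProdFinEquiv p)) * (Uᵀ * myMk n k (fun _ => (1:ℝ))) = 0 := by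
    rw [← Matrix.mul_assoc, ← hUL, Matrix.mul_assoc, hLY, Matrix.mul_zero]
  have hlamB : ∀ p, lam (finProdFinEquiv p)
      * ((Uᵀ * myMk n k (fun _ => (1:ℝ))) * (Uᵀ * myMk n k (fun _ => (1:ℝ)))ᵀ) p p = 0 := by
    intro p
    have hrow : ∀ j, lam (finProdFinEquiv p) * (Uᵀ * myMk n k (fun _ => (1:ℝ))) p j = 0 := by
      intro j
      have h3 := congrFun (congrFun hLamB p) j
      rwa [Matrix.diagonal_mul] at h3
    rw [Matrix.mul_apply, Finset.mul_sum]
    refine Finset.sum_eq_zero fun j _ => ?_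
    rw [Matrix.transpose_apply, ← mul_assoc, hrow j, zero_mul]
  -- the projection Q
  have hm' : m ≠ 0 := ne_of_gt hm
  have hn' : (n:ℝ) ≠ 0 := ne_of_gt hn0
  set Q : Matrix (Fin n × Fin k) (Fin n × Fin k) ℝ :=
      m⁻¹ • (myMk n k ζ * (myMk n k ζ)ᵀ)
      + (n:ℝ)⁻¹ • (myMk n k (fun _ => (1:ℝ)) * (myMk n k (fun _ => (1:ℝ)))ᵀ) with hQ_def
  have hZZt : (myMk n k ζ * (myMk n k ζ)ᵀ) * (myMk n k ζ * (myMk n k ζ)ᵀ)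
      = m • (myMk n k ζ * (myMk n k ζ)ᵀ) := by
    calc (myMk n k ζ * (myMk n k ζ)ᵀ) * (myMk n k ζ * (myMk n k ζ)ᵀ)
        = myMk n k ζ * (((myMk n k ζ)ᵀ * myMk n k ζ) * (myMk n k ζ)ᵀ) := by
          simp only [Matrix.mul_assoc]
      _ = _ := by rw [hZZ, Matrix.smul_mul, Matrix.one_mul, Matrix.mul_smul]
  have hYYt : (myMk n k (fun _ => (1:ℝ)) * (myMk n k (fun _ => (1:ℝ)))ᵀ)
        * (myMk n k (fun _ => (1:ℝ)) * (myMk n k (fun _ => (1:ℝ)))ᵀ)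
      = (n:ℝ) • (myMk n k (fun _ => (1:ℝ)) * (myMk n k (fun _ => (1:ℝ)))ᵀ) := by
    calc (myMk n k (fun _ => (1:ℝ)) * (myMk n k (fun _ => (1:ℝ)))ᵀ)
          * (myMk n k (fun _ => (1:ℝ)) * (myMk n k (fun _ => (1:ℝ)))ᵀ)
        = myMk n k (fun _ => (1:ℝ)) * (((myMk n k (fun _ => (1:ℝ)))ᵀ * myMk n k (fun _ => (1:ℝ)))
            * (myMk n k (fun _ => (1:ℝ)))ᵀ) := by
          simp only [Matrix.mul_assoc]
      _ = _ := by rw [hYY, Matrix.smul_mul, Matrix.one_mul, Matrix.mul_smul]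
  have hZYt : (myMk n k ζ * (myMk n k ζ)ᵀ)
        * (myMk n k (fun _ => (1:ℝ)) * (myMk n k (fun _ => (1:ℝ)))ᵀ) = 0 := by
    calc (myMk n k ζ * (myMk n k ζ)ᵀ) * (myMk n k (fun _ => (1:ℝ)) * (myMk n k (fun _ => (1:ℝ)))ᵀ)
        = myMk n k ζ * (((myMk n k ζ)ᵀ * myMk n k (fun _ => (1:ℝ))) * (myMk n k (fun _ => (1:ℝ)))ᵀ) := by
          simp only [Matrix.mul_assoc]
      _ = 0 := by rw [hZY, Matrix.zero_mul, Matrix.mul_zero]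
  have hYZt : (myMk n k (fun _ => (1:ℝ)) * (myMk n k (fun _ => (1:ℝ)))ᵀ)
        * (myMk n k ζ * (myMk n k ζ)ᵀ) = 0 := by
    calc (myMk n k (fun _ => (1:ℝ)) * (myMk n k (fun _ => (1:ℝ)))ᵀ) * (myMk n k ζ * (myMk n k ζ)ᵀ)
        = myMk n k (fun _ => (1:ℝ)) * (((myMk n k (fun _ => (1:ℝ)))ᵀ * myMk n k ζ) * (myMk n k ζ)ᵀ) := by
          simp only [Matrix.mul_assoc]
      _ = 0 := by rw [hYZ, Matrix.zero_mul, Matrix.mul_zero]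
  have hQQ : Q * Q = Q := by
    rw [hQ_def]
    simp only [Matrix.add_mul, Matrix.mul_add, Matrix.smul_mul, Matrix.mul_smul,
      hZZt, hZYt, hYZt, hYYt, smul_zero, add_zero, zero_add, smul_smul]
    congr 2
    · field_simp
    · field_simp
  have hQt : Qᵀ = Q := by
    rw [hQ_def]
    simp [Matrix.transpose_add, Matrix.transpose_smul, Matrix.transpose_mul,
      Matrix.transpose_transpose]
  have h1Q : ((1 : Matrix (Fin n × Fin k) (Fin n × Fin k) ℝ) - Q).PosSemidef := by
    have h2 : ((1 : Matrix (Fin n × Fin k) (Fin n × Fin k) ℝ) - Q)ᴴ * (1 - Q) = 1 - Q := by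
      rw [Matrix.conjTranspose_eq_transpose_of_trivial, Matrix.transpose_sub,
        Matrix.transpose_one, hQt, Matrix.sub_mul, Matrix.mul_sub, Matrix.mul_sub, hQQ]
      simp only [Matrix.one_mul, Matrix.mul_one]
      abel
    have h3 := Matrix.posSemidef_conjTranspose_mul_self
      ((1 : Matrix (Fin n × Fin k) (Fin n × Fin k) ℝ) - Q)
    rwa [h2] at h3
  have hQpsd : Q.PosSemidef := by
    have h2 : Qᴴ * Q = Q := by
      rw [Matrix.conjTranspose_eq_transpose_of_trivial, hQt, hQQ]
    have h3 := Matrix.posSemidef_conjTranspose_mul_self Q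
    rwa [h2] at h3
  have hUQU_psd : (Uᵀ * Q * U).PosSemidef := by
    have h3 := hQpsd.conjTranspose_mul_mul_same U
    rwa [Matrix.conjTranspose_eq_transpose_of_trivial] at h3
  have hU1QU_psd : (Uᵀ * ((1 : Matrix (Fin n × Fin k) (Fin n × Fin k) ℝ) - Q) * U).PosSemidef := by
    have h3 := h1Q.conjTranspose_mul_mul_same U
    rwa [Matrix.conjTranspose_eq_transpose_of_trivial] at h3
  set t' : Fin n × Fin k → ℝ := fun p => (Uᵀ * Q * U) p p with ht'_def
  have ht'0 : ∀ p, 0 ≤ t' p := fun p => myDiagNonneg hUQU_psd p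
  have ht'1 : ∀ p, t' p ≤ 1 := by
    intro p
    have h2 := myDiagNonneg hU1QU_psd p
    have h3 : Uᵀ * ((1 : Matrix (Fin n × Fin k) (Fin n × Fin k) ℝ) - Q) * U
        = 1 - Uᵀ * Q * U := by
      rw [Matrix.mul_sub, Matrix.mul_one, Matrix.sub_mul, hUo]
    rw [h3] at h2
    have h4 : ((1 : Matrix (Fin n × Fin k) (Fin n × Fin k) ℝ) - Uᵀ * Q * U) p p = 1 - t' p := by
      rw [Matrix.sub_apply, Matrix.one_apply_eq, ht'_def]
    rw [h4] at h2; linarith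
  have htrQ : ∑ p, t' p = 2 * (k:ℝ) := by
    have h1 : ∑ p, t' p = (Uᵀ * Q * U).trace := by
      rw [Matrix.trace]; exact Finset.sum_congr rfl fun p _ => rfl
    have h2 : (Uᵀ * Q * U).trace = Q.trace := by
      rw [Matrix.trace_mul_comm (Uᵀ * Q) U, ← Matrix.mul_assoc, hU, Matrix.one_mul]
    have h3 : (myMk n k ζ * (myMk n k ζ)ᵀ).trace = m * k := by
      rw [Matrix.trace_mul_comm (myMk n k ζ) ((myMk n k ζ)ᵀ), hZZ, Matrix.trace_smul,
        Matrix.trace_one]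
      simp [smul_eq_mul]
    have h4 : (myMk n k (fun _ => (1:ℝ)) * (myMk n k (fun _ => (1:ℝ)))ᵀ).trace = n * k := by
      rw [Matrix.trace_mul_comm (myMk n k (fun _ => (1:ℝ))) ((myMk n k (fun _ => (1:ℝ)))ᵀ), hYY,
        Matrix.trace_smul, Matrix.trace_one]
      simp [smul_eq_mul]
    rw [h1, h2, hQ_def, Matrix.trace_add, Matrix.trace_smul, Matrix.trace_smul, h3, h4]
    simp only [smul_eq_mul]
    field_simp
    ring
  have hUQU : Uᵀ * Q * U = m⁻¹ • ((Uᵀ * myMk n k ζ) * (Uᵀ * myMk n k ζ)ᵀ)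
      + (n:ℝ)⁻¹ • ((Uᵀ * myMk n k (fun _ => (1:ℝ))) * (Uᵀ * myMk n k (fun _ => (1:ℝ)))ᵀ) := by
    rw [hQ_def]
    simp only [Matrix.mul_add, Matrix.add_mul, Matrix.mul_smul, Matrix.smul_mul,
      Matrix.transpose_mul, Matrix.transpose_transpose, Matrix.mul_assoc]
  have hkey : ∀ p : Fin n × Fin k, lam (finProdFinEquiv p)
      * ((Uᵀ * myMk n k ζ) * (Uᵀ * myMk n k ζ)ᵀ) p p = m * (lam (finProdFinEquiv p) * t' p) := by
    intro p
    have h5 : t' p = m⁻¹ * ((Uᵀ * myMk n k ζ) * (Uᵀ * myMk n k ζ)ᵀ) p p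
        + (n:ℝ)⁻¹ * ((Uᵀ * myMk n k (fun _ => (1:ℝ))) * (Uᵀ * myMk n k (fun _ => (1:ℝ)))ᵀ) p p := by
      rw [ht'_def]
      rw [hUQU]
      simp [Matrix.add_apply, Matrix.smul_apply, smul_eq_mul]
    rw [h5]
    have h6 := hlamB p
    have h7 : m * (lam (finProdFinEquiv p) * (m⁻¹ * ((Uᵀ * myMk n k ζ) * (Uᵀ * myMk n k ζ)ᵀ) p p
        + (n:ℝ)⁻¹ * ((Uᵀ * myMk n k (fun _ => (1:ℝ))) * (Uᵀ * myMk n k (fun _ => (1:ℝ)))ᵀ) p p))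
        = (m * m⁻¹) * (lam (finProdFinEquiv p) * ((Uᵀ * myMk n k ζ) * (Uᵀ * myMk n k ζ)ᵀ) p p)
        + (m * (n:ℝ)⁻¹) * (lam (finProdFinEquiv p)
            * ((Uᵀ * myMk n k (fun _ => (1:ℝ))) * (Uᵀ * myMk n k (fun _ => (1:ℝ)))ᵀ) p p) := by
      ring
    rw [h7, h6, mul_zero, add_zero, mul_inv_cancel₀ hm', one_mul]
  have htrace_eq : (mwEdge n k W S Sᶜ).trace
      = m * ∑ p : Fin n × Fin k, lam (finProdFinEquiv p) * t' p := by
    rw [← hedge_tr, htr_spec, Finset.mul_sum]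
    exact Finset.sum_congr rfl fun p _ => hkey p
  -- reindex eigenvalue sums over the natural numbers
  have hN2k : 2 * k ≤ n * k := Nat.mul_le_mul_right k hnn
  set t2 : ℕ → ℝ := fun i => if h : i < n * k then t' (finProdFinEquiv.symm ⟨i, h⟩) else 0
    with ht2_def
  have ht2a : ∀ i < n * k, 0 ≤ t2 i := by
    intro i hi
    simp only [ht2_def]
    rw [dif_pos hi]
    exact ht'0 _
  have ht2b : ∀ i < n * k, t2 i ≤ 1 := by
    intro i hi
    simp only [ht2_def]
    rw [dif_pos hi]
    exact ht'1 _
  have hsum_t2 : ∑ i ∈ range (n * k), t2 i = ∑ p : Fin n × Fin k, t' p := by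
    rw [← Fin.sum_univ_eq_sum_range]
    rw [← Equiv.sum_comp (finProdFinEquiv.symm : Fin (n*k) ≃ Fin n × Fin k) t']
    refine Finset.sum_congr rfl fun i _ => ?_
    simp only [ht2_def]
    rw [dif_pos i.isLt]
  have hsum_lam : ∑ i ∈ range (n * k), lam i * t2 i
      = ∑ p : Fin n × Fin k, lam (finProdFinEquiv p) * t' p := by
    rw [← Fin.sum_univ_eq_sum_range (fun i => lam i * t2 i)]
    rw [← Equiv.sum_comp (finProdFinEquiv : Fin n × Fin k ≃ Fin (n*k))
      (fun i : Fin (n*k) => lam i * t2 i)]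
    refine Finset.sum_congr rfl fun p _ => ?_
    simp only [ht2_def]
    rw [dif_pos (finProdFinEquiv p).isLt]
    rw [Fin.eta, Equiv.symm_apply_apply]
  have hmain := mySelect (n*k) k hN2k lam hlam t2 ht2a ht2b (by rw [hsum_t2, htrQ]) hkpos
  have hsplitlam : ∑ i ∈ range (2 * k), lam i = ∑ i ∈ range k, lam (k + i) := by
    rw [two_mul, Finset.sum_range_add]
    have h8 : ∑ i ∈ range k, lam i = 0 :=
      Finset.sum_eq_zero fun i hi => hzero i (Finset.mem_range.1 hi)
    rw [h8, zero_add]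
  have hS0 : 0 ≤ ∑ i ∈ range k, lam (k + i) := by
    refine Finset.sum_nonneg fun i hi => ?_
    have hik := Finset.mem_range.1 hi
    have h1 : lam i = 0 := hzero i hik
    have h2 : lam i ≤ lam (k + i) :=
      hlam (Set.mem_Iio.mpr (lt_of_lt_of_le (by omega) hN2k))
        (Set.mem_Iio.mpr (lt_of_lt_of_le (by omega) hN2k)) (by omega)
    linarith
  have hineq : m * (∑ i ∈ range k, lam (k + i)) ≤ (mwEdge n k W S Sᶜ).trace := by
    rw [htrace_eq]
    have h9 := hmain
    rw [hsum_lam, hsplitlam] at h9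
    exact mul_le_mul_of_nonneg_left h9 hm.le
  -- final arithmetic
  have hminn : min s sc * (n:ℝ) ≤ 2 * (s * sc) := by
    rcases le_total s sc with h|h
    · rw [min_eq_left h]; nlinarith
    · rw [min_eq_right h]; nlinarith
  have hminpos : (0:ℝ) < min s sc := lt_min (by linarith) (by linarith)
  have hmlow : min s sc ≤ 2 * m := by
    have h2m : 2 * m = 2 * (s * sc) / n := by rw [hm_def]; ring
    have h3 : min s sc ≤ 2 * (s * sc) / n := by
      rw [le_div_iff₀ hn0]; exact hminn
    linarith
  rw [le_div_iff₀ (by positivity : (0:ℝ) < d * min s sc)]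
  have hLHS : 1 / (2 * d) * (∑ i ∈ range k, lam (k+i)) * (d * min s sc)
      = (∑ i ∈ range k, lam (k+i)) * min s sc / 2 := by
    field_simp
  rw [hLHS]
  nlinarith [hineq, hS0, hmlow, hm]
end
end

section
/- (Cheeger-type lower bound, Loewner form.) Let (G,W) be a d-regular matrix-weighted graph with k×k weight matrices and d > 0, with Laplacian eigenvalues 0 = λ_1 = … = λ_k ≤ λ_{k+1} ≤ … ≤ λ_{nk}. Then for every vertex subset S with ∅ ≠ S ≠ V, the k×k matrix h^⪯(S) = E(S, V∖S) / (d · min(|S|, |V∖S|)) satisfies h^⪯(S) ⪰ (λ_{k+1}/(2d))·I_k in the Loewner order; that is, h^⪯(S) − (λ_{k+1}/(2d))·I_k is positive semidefinite. -/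
open Matrix Finset

noncomputable section

/-! ### Auxiliary lemmas -/

/-- Quadratic form of the Laplacian on vectors of the form `p ↦ σ p.1 * x p.2`. -/
lemma mw_quad_formula (n k : ℕ) (d : ℝ)
    (W : Fin n → Fin n → Matrix (Fin k) (Fin k) ℝ)
    (hreg : ∀ v : Fin n, ∑ u, W u v = d • (1 : Matrix (Fin k) (Fin k) ℝ))
    (σ : Fin n → ℝ) (x : Fin k → ℝ) :
    (fun p : Fin n × Fin k => σ p.1 * x p.2) ⬝ᵥ
      (mwLap n k W *ᵥ fun p => σ p.1 * x p.2)
      = d * (∑ v, σ v ^ 2) * (x ⬝ᵥ x)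
        - ∑ v, ∑ u, σ v * σ u * (x ⬝ᵥ (W v u) *ᵥ x) := by
  have hdeg : (fun p : Fin n × Fin k => σ p.1 * x p.2) ⬝ᵥ
      (mwDeg n k W *ᵥ fun p => σ p.1 * x p.2) = d * (∑ v, σ v ^ 2) * (x ⬝ᵥ x) := by
    simp only [dotProduct, mulVec, mwDeg, Fintype.sum_prod_type, hreg,
      Matrix.smul_apply, Matrix.one_apply, smul_eq_mul, mul_ite, mul_zero, mul_one,
      ite_mul, zero_mul, Finset.sum_ite_irrel, Finset.sum_ite_eq, Finset.sum_ite_eq',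
      Finset.mem_univ, if_true, Finset.sum_const_zero]
    rw [Finset.mul_sum, Finset.sum_comm]
    refine Finset.sum_congr rfl fun i _ => ?_
    rw [Finset.mul_sum, Finset.sum_mul]
    refine Finset.sum_congr rfl fun v _ => ?_
    ring
  have hadj : (fun p : Fin n × Fin k => σ p.1 * x p.2) ⬝ᵥ
      (mwAdj n k W *ᵥ fun p => σ p.1 * x p.2)
      = ∑ v, ∑ u, σ v * σ u * (x ⬝ᵥ (W v u) *ᵥ x) := by
    simp only [dotProduct, mulVec, mwAdj, Fintype.sum_prod_type, Finset.mul_sum,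
      Finset.sum_mul]
    refine Finset.sum_congr rfl fun v _ => ?_
    rw [Finset.sum_comm]
    refine Finset.sum_congr rfl fun u _ => ?_
    refine Finset.sum_congr rfl fun i _ => ?_
    refine Finset.sum_congr rfl fun j _ => ?_
    ring
  have h : mwLap n k W *ᵥ (fun p : Fin n × Fin k => σ p.1 * x p.2)
      = mwDeg n k W *ᵥ (fun p => σ p.1 * x p.2)
        - mwAdj n k W *ᵥ (fun p => σ p.1 * x p.2) := by
    rw [mwLap, Matrix.sub_mulVec]
  rw [h, dotProduct_sub, hdeg, hadj]

/-- Spectral lower bound for the quadratic form of `U D Uᵀ`. -/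
lemma mw_spectral_bound {ι : Type*} [Fintype ι] [DecidableEq ι] (lam' : ι → ℝ) (μ : ℝ)
    (U : Matrix ι ι ℝ) (hU : U * Uᵀ = 1)
    (K : Finset ι) (hge : ∀ p ∉ K, μ ≤ lam' p)
    (y : ι → ℝ) (hy : ∀ p ∈ K, (Uᵀ *ᵥ y) p = 0) :
    μ * (y ⬝ᵥ y) ≤ y ⬝ᵥ ((U * Matrix.diagonal lam' * Uᵀ) *ᵥ y) := by
  set z := Uᵀ *ᵥ y with hz
  have h1 : y ⬝ᵥ ((U * Matrix.diagonal lam' * Uᵀ) *ᵥ y) = ∑ p, lam' p * (z p)^2 := by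
    rw [← Matrix.mulVec_mulVec, ← Matrix.mulVec_mulVec, Matrix.dotProduct_mulVec,
      ← Matrix.mulVec_transpose, ← hz]
    simp only [dotProduct, Matrix.mulVec_diagonal]
    refine Finset.sum_congr rfl fun p _ => by ring
  have h2 : y ⬝ᵥ y = ∑ p, (z p)^2 := by
    have h3 : y ⬝ᵥ y = y ⬝ᵥ ((U * Uᵀ) *ᵥ y) := by rw [hU, Matrix.one_mulVec]
    rw [h3, ← Matrix.mulVec_mulVec, Matrix.dotProduct_mulVec, ← Matrix.mulVec_transpose,
      ← hz]
    simp only [dotProduct]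
    refine Finset.sum_congr rfl fun p _ => by ring
  rw [h1, h2, Finset.mul_sum]
  refine Finset.sum_le_sum fun p _ => ?_
  by_cases hp : p ∈ K
  · rw [hy p hp]; ring_nf; exact le_refl _
  · exact mul_le_mul_of_nonneg_right (hge p hp) (sq_nonneg _)

/-- Dot product against a sum of matrices. -/
lemma mw_dot_sum {k : ℕ} {β : Type*} (F : Finset β) (M : β → Matrix (Fin k) (Fin k) ℝ)
    (x : Fin k → ℝ) :
    x ⬝ᵥ (∑ b ∈ F, M b) *ᵥ x = ∑ b ∈ F, x ⬝ᵥ (M b) *ᵥ x := by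
  classical
  induction F using Finset.cons_induction with
  | empty => simp
  | cons a F ha ih =>
    rw [Finset.sum_cons, Finset.sum_cons, Matrix.add_mulVec, dotProduct_add, ih]

/-- Block-constant vectors are in the kernel of the Laplacian of a regular graph. -/
lemma mw_const_in_ker (n k : ℕ) (d : ℝ)
    (W : Fin n → Fin n → Matrix (Fin k) (Fin k) ℝ)
    (hsym : ∀ u v, W u v = W v u)
    (hreg : ∀ v : Fin n, ∑ u, W u v = d • (1 : Matrix (Fin k) (Fin k) ℝ))
    (g : Fin k → ℝ) :
    mwLap n k W *ᵥ (fun p : Fin n × Fin k => g p.2) = 0 := by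
  funext p
  obtain ⟨v, i⟩ := p
  have hrow : ∑ u, W v u = d • (1 : Matrix (Fin k) (Fin k) ℝ) := by
    rw [show (∑ u, W v u) = ∑ u, W u v from Finset.sum_congr rfl fun u _ => hsym v u,
      hreg v]
  simp only [mwLap, mwDeg, mwAdj, Matrix.sub_mulVec, Pi.sub_apply, mulVec, dotProduct,
    Fintype.sum_prod_type, Pi.zero_apply]
  have h1 : ∑ u, ∑ j, (if v = u then (∑ w, W w v) i j else 0) * g j = d * g i := by
    rw [Finset.sum_eq_single v]
    · simp only [if_pos rfl, hreg v, Matrix.smul_apply, Matrix.one_apply, smul_eq_mul,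
        mul_ite, mul_one, mul_zero, ite_mul, zero_mul]
      simp
    · intro u _ hu; simp [Ne.symm hu]
    · simp
  have h2 : ∑ u, ∑ j, W v u i j * g j = d * g i := by
    rw [Finset.sum_comm]
    have h3 : ∀ j, ∑ u, W v u i j * g j
        = (d • (1 : Matrix (Fin k) (Fin k) ℝ)) i j * g j := by
      intro j
      rw [← Finset.sum_mul]
      congr 1
      rw [← hrow]
      simp [Matrix.sum_apply]
    rw [Finset.sum_congr rfl fun j _ => h3 j]
    simp only [Matrix.smul_apply, Matrix.one_apply, smul_eq_mul, mul_ite, mul_one,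
      mul_zero, ite_mul, zero_mul]
    simp
  simp only [Matrix.sub_apply, mwDeg, mwAdj, sub_mul, Finset.sum_sub_distrib]
  rw [h1, h2, sub_self]

/-- If `lam k > 0`, the first `k` columns of `U` are constant on vertex blocks. -/
lemma mw_columns_constant (n k : ℕ) (d : ℝ)
    (W : Fin n → Fin n → Matrix (Fin k) (Fin k) ℝ)
    (hsym : ∀ u v, W u v = W v u)
    (hreg : ∀ v : Fin n, ∑ u, W u v = d • (1 : Matrix (Fin k) (Fin k) ℝ))
    (lam : ℕ → ℝ) (hlam : MonotoneOn lam (Set.Iio (n * k)))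
    (hzero : ∀ i < k, lam i = 0) (hpos : 0 < lam k)
    (U : Matrix (Fin n × Fin k) (Fin n × Fin k) ℝ) (hU : U * Uᵀ = 1)
    (hLW : mwLap n k W =
      U * Matrix.diagonal (fun p => lam (finProdFinEquiv p)) * Uᵀ)
    (hn : 0 < n) :
    ∀ p : Fin n × Fin k, (finProdFinEquiv p : ℕ) < k →
      ∃ g : Fin k → ℝ, ∀ q, U q p = g q.2 := by
  classical
  set e : Fin n × Fin k ≃ Fin (n * k) := finProdFinEquiv with he
  have hlam_ge : ∀ p : Fin n × Fin k, k ≤ (e p : ℕ) → lam k ≤ lam (e p) := by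
    intro p hp
    exact hlam (Set.mem_Iio.mpr (lt_of_le_of_lt hp (e p).2)) (Set.mem_Iio.mpr (e p).2) hp
  have hlam_nonneg : ∀ p : Fin n × Fin k, 0 ≤ lam (e p) := by
    intro p
    by_cases hp : (e p : ℕ) < k
    · rw [hzero _ hp]
    · exact le_of_lt (lt_of_lt_of_le hpos (hlam_ge p (not_lt.mp hp)))
  set ι : (Fin k → ℝ) →ₗ[ℝ] (Fin n × Fin k → ℝ) :=
    LinearMap.funLeft ℝ ℝ (Prod.snd : Fin n × Fin k → Fin k) with hι
  have hιinj : Function.Injective ι := by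
    haveI : Nonempty (Fin n) := ⟨⟨0, hn⟩⟩
    exact LinearMap.funLeft_injective_of_surjective ℝ ℝ _ Prod.snd_surjective
  set C : Submodule ℝ (Fin n × Fin k → ℝ) := LinearMap.range ι with hC
  have hrankC : Module.finrank ℝ C = k := by
    rw [hC, LinearMap.finrank_range_of_inj hιinj, Module.finrank_fintype_fun_eq_card,
      Fintype.card_fin]
  set T : Finset (Fin n × Fin k) := univ.filter (fun p => (e p : ℕ) < k) with hT
  set cols : Finset (Fin n × Fin k → ℝ) := T.image (fun p => (Uᵀ p)) with hcols
  set Ksp : Submodule ℝ (Fin n × Fin k → ℝ) := Submodule.span ℝ (cols : Set _) with hK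
  have hrankK : Module.finrank ℝ Ksp ≤ k := by
    refine le_trans (finrank_span_finset_le_card cols) (le_trans Finset.card_image_le ?_)
    have h4 : T.card ≤ (Finset.range k).card := by
      refine Finset.card_le_card_of_injOn (fun p => (e p : ℕ)) ?_ ?_
      · intro a ha
        exact Finset.mem_range.mpr ((Finset.mem_filter.mp ha).2)
      · intro a _ b _ hab
        exact e.injective (Fin.val_injective hab)
    simpa using h4
  have hker_sub : ∀ w : Fin n × Fin k → ℝ, mwLap n k W *ᵥ w = 0 → w ∈ Ksp := by
    intro w hw
    set z : Fin n × Fin k → ℝ := Uᵀ *ᵥ w with hzdef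
    have hquad : ∑ p : Fin n × Fin k, lam (e p) * (z p)^2 = 0 := by
      have h0 : w ⬝ᵥ (mwLap n k W *ᵥ w) = 0 := by rw [hw, dotProduct_zero]
      rw [hLW] at h0
      rw [← h0, ← Matrix.mulVec_mulVec, ← Matrix.mulVec_mulVec, Matrix.dotProduct_mulVec,
        ← Matrix.mulVec_transpose]
      simp only [dotProduct, Matrix.mulVec_diagonal, ← hzdef]
      exact Finset.sum_congr rfl fun p _ => by ring
    have hterm : ∀ p : Fin n × Fin k, lam (e p) * (z p)^2 = 0 := by
      intro p
      exact (Finset.sum_eq_zero_iff_of_nonneg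
        (fun q _ => mul_nonneg (hlam_nonneg q) (sq_nonneg _))).mp hquad p (Finset.mem_univ p)
    have hz0 : ∀ p : Fin n × Fin k, ¬((e p : ℕ) < k) → z p = 0 := by
      intro p hp
      have hl : 0 < lam (e p) := lt_of_lt_of_le hpos (hlam_ge p (not_lt.mp hp))
      have h2 : (z p)^2 = 0 := by
        rcases mul_eq_zero.mp (hterm p) with h | h
        · exact absurd h (ne_of_gt hl)
        · exact h
      exact pow_eq_zero_iff (two_ne_zero) |>.mp h2
    have hwrep : w = ∑ p : Fin n × Fin k, z p • (Uᵀ p) := by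
      conv_lhs => rw [show w = (U * Uᵀ) *ᵥ w from by rw [hU, Matrix.one_mulVec]]
      rw [← Matrix.mulVec_mulVec]
      funext q
      simp only [mulVec, dotProduct, Finset.sum_apply, Pi.smul_apply, smul_eq_mul,
        Matrix.transpose_apply, ← hzdef]
      exact Finset.sum_congr rfl fun p _ => mul_comm _ _
    rw [hwrep]
    refine Submodule.sum_mem _ fun p _ => ?_
    by_cases hp : (e p : ℕ) < k
    · refine Submodule.smul_mem _ _ (Submodule.subset_span ?_)
      exact Finset.mem_coe.mpr (Finset.mem_image.mpr
        ⟨p, Finset.mem_filter.mpr ⟨Finset.mem_univ _, hp⟩, rfl⟩)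
    · rw [hz0 p hp, zero_smul]; exact Submodule.zero_mem _
  have hCle : C ≤ Ksp := by
    rintro w ⟨g, rfl⟩
    exact hker_sub _ (mw_const_in_ker n k d W hsym hreg g)
  have heq : C = Ksp :=
    Submodule.eq_of_le_of_finrank_le hCle (hrankK.trans_eq hrankC.symm)
  intro p hp
  have hmem : (Uᵀ p) ∈ Ksp := Submodule.subset_span (Finset.mem_coe.mpr
    (Finset.mem_image.mpr ⟨p, Finset.mem_filter.mpr ⟨Finset.mem_univ _, hp⟩, rfl⟩))
  rw [← heq] at hmem
  obtain ⟨g, hg⟩ := hmem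
  refine ⟨g, fun q => ?_⟩
  have h5 : (Uᵀ p) q = g q.2 := by rw [← hg]; rfl
  simpa using h5.symm ▸ rfl

lemma mw_min_arith (s t : ℝ) (hs : 0 < s) (ht : 0 < t) :
    min s t * (s + t) ≤ 2 * (s * t) := by
  rcases le_total s t with h | h
  · rw [min_eq_left h]; nlinarith
  · rw [min_eq_right h]; nlinarith

lemma mw_final_arith (lamk X s t mn q : ℝ) (hX0 : 0 ≤ X) (hlk : 0 ≤ lamk)
    (hs0 : 0 < s) (ht0 : 0 < t) (hmn : mn * (s + t) ≤ 2 * (s * t))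
    (step1 : lamk * (s * t) * X ≤ (s + t) * q) :
    lamk * mn * X / 2 ≤ q := by
  have hmm : lamk * X * (mn * (s + t)) ≤ lamk * X * (2 * (s * t)) :=
    mul_le_mul_of_nonneg_left hmn (mul_nonneg hlk hX0)
  have h2 : (2 * (s + t)) * (lamk * mn * X / 2) ≤ (2 * (s + t)) * q := by
    nlinarith [step1, hmm]
  exact le_of_mul_le_mul_left h2 (by linarith)

/-- Cheeger-type lower bound, Loewner form: for a `d`-regular matrix-weighted
graph (`d > 0`) and every vertex subset `S` with `∅ ≠ S ≠ V`, the matrix Cheeger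
ratio `h^⪯(S) = E(S, V∖S) / (d min(|S|, |V∖S|))` satisfies
`h^⪯(S) ⪰ (λ_{k+1}/(2d)) I_k` in the Loewner order, i.e.
`h^⪯(S) - (λ_{k+1}/(2d)) I_k` is positive semidefinite.  Here `lam` enumerates
the Laplacian eigenvalues in increasing order (0-indexed), with
`λ_1 = ⋯ = λ_k = 0`, witnessed by an orthogonal spectral decomposition. -/
theorem matrix_weighted_cheeger_loewner_lower_bound
    (n k : ℕ) (d : ℝ) (hd : 0 < d) (G : SimpleGraph (Fin n))
    (W : Fin n → Fin n → Matrix (Fin k) (Fin k) ℝ)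
    (hpsd : ∀ u v, (W u v).PosSemidef)
    (hsym : ∀ u v, W u v = W v u)
    (h0 : ∀ u v, ¬ G.Adj u v → W u v = 0)
    (hreg : ∀ v : Fin n, ∑ u, W u v = d • (1 : Matrix (Fin k) (Fin k) ℝ))
    (lam : ℕ → ℝ) (hlam : MonotoneOn lam (Set.Iio (n * k)))
    (hzero : ∀ i < k, lam i = 0)
    (U : Matrix (Fin n × Fin k) (Fin n × Fin k) ℝ) (hU : U * Uᵀ = 1)
    (hLW : mwLap n k W =
      U * Matrix.diagonal (fun p => lam (finProdFinEquiv p)) * Uᵀ) :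
    ∀ S : Finset (Fin n), S.Nonempty → S ≠ Finset.univ →
      ((d * min (S.card : ℝ) (Sᶜ.card : ℝ))⁻¹ • mwEdge n k W S Sᶜ -
        (lam k / (2 * d)) • (1 : Matrix (Fin k) (Fin k) ℝ)).PosSemidef := by
  intro S hS hSu
  classical
  have hScne : Sᶜ.Nonempty := by
    by_contra h
    rw [Finset.not_nonempty_iff_eq_empty, Finset.compl_eq_empty_iff] at h
    exact hSu h
  set s : ℝ := (S.card : ℝ) with hs
  set t : ℝ := (Sᶜ.card : ℝ) with ht
  have hs0 : 0 < s := by rw [hs]; exact_mod_cast Finset.card_pos.mpr hS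
  have ht0 : 0 < t := by rw [ht]; exact_mod_cast Finset.card_pos.mpr hScne
  have hstn : s + t = (n : ℝ) := by
    rw [hs, ht]
    have h6 := Finset.card_add_card_compl S
    rw [Fintype.card_fin] at h6
    exact_mod_cast h6
  have hmin0 : 0 < min s t := lt_min hs0 ht0
  have hc0 : 0 < d * min s t := mul_pos hd hmin0
  have hEherm : (mwEdge n k W S Sᶜ).IsHermitian := by
    show (mwEdge n k W S Sᶜ)ᴴ = _
    rw [mwEdge, Matrix.conjTranspose_sum]
    refine Finset.sum_congr rfl fun a _ => ?_
    rw [Matrix.conjTranspose_sum]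
    exact Finset.sum_congr rfl fun b _ => (hpsd a b).1
  rw [Matrix.posSemidef_iff_dotProduct_mulVec]
  constructor
  · show _ᴴ = _
    rw [Matrix.conjTranspose_sub, Matrix.conjTranspose_smul, Matrix.conjTranspose_smul,
      hEherm, Matrix.conjTranspose_one, star_trivial, star_trivial]
  intro x
  have hstar : star x = x := by funext i; simp
  set X : ℝ := x ⬝ᵥ x with hX
  set Q : Fin n → Fin n → ℝ := fun v u => x ⬝ᵥ (W v u) *ᵥ x with hQdef
  set q : ℝ := x ⬝ᵥ (mwEdge n k W S Sᶜ) *ᵥ x with hqdef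
  have hX0 : 0 ≤ X := by
    rw [hX]; exact Finset.sum_nonneg fun i _ => mul_self_nonneg _
  have hQ0 : ∀ v u, 0 ≤ Q v u := fun v u => by
    have h7 := (hpsd v u).dotProduct_mulVec_nonneg x; rwa [hstar] at h7
  have hQsym : ∀ v u, Q v u = Q u v := fun v u => by
    rw [hQdef]; simp only; rw [hsym v u]
  have hqexp : q = ∑ a ∈ S, ∑ b ∈ Sᶜ, Q a b := by
    rw [hqdef, mwEdge, mw_dot_sum]
    exact Finset.sum_congr rfl fun a _ => mw_dot_sum _ _ _
  have hq0 : 0 ≤ q := by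
    rw [hqexp]
    exact Finset.sum_nonneg fun a _ => Finset.sum_nonneg fun b _ => hQ0 a b
  have hrowsum : ∀ v, ∑ u, Q v u = d * X := by
    intro v
    have hrow : ∑ u, W v u = d • (1 : Matrix (Fin k) (Fin k) ℝ) := by
      rw [show (∑ u, W v u) = ∑ u, W u v from Finset.sum_congr rfl fun u _ => hsym v u,
        hreg v]
    calc ∑ u, Q v u = x ⬝ᵥ (∑ u, W v u) *ᵥ x := (mw_dot_sum univ (W v) x).symm
    _ = x ⬝ᵥ (d • (1 : Matrix (Fin k) (Fin k) ℝ)) *ᵥ x := by rw [hrow]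
    _ = d * X := by
        rw [Matrix.smul_mulVec, Matrix.one_mulVec, dotProduct_smul, smul_eq_mul, hX]
  have hgoal : star x ⬝ᵥ (((d * min s t)⁻¹ • mwEdge n k W S Sᶜ
        - (lam k / (2 * d)) • (1 : Matrix (Fin k) (Fin k) ℝ)) *ᵥ x)
      = (d * min s t)⁻¹ * q - (lam k / (2 * d)) * X := by
    rw [hstar, Matrix.sub_mulVec, dotProduct_sub, Matrix.smul_mulVec, dotProduct_smul,
      Matrix.smul_mulVec, dotProduct_smul, Matrix.one_mulVec, smul_eq_mul,
      smul_eq_mul, ← hqdef, ← hX]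
  rw [hgoal]
  rcases le_or_gt (lam k) 0 with hlk | hlk
  · have h1 : 0 ≤ (d * min s t)⁻¹ * q := mul_nonneg (inv_nonneg.mpr hc0.le) hq0
    have h2 : lam k / (2 * d) * X ≤ 0 :=
      mul_nonpos_of_nonpos_of_nonneg
        (div_nonpos_of_nonpos_of_nonneg hlk (by positivity)) hX0
    linarith
  · obtain ⟨v0, hv0⟩ := hS
    have hn0 : 0 < n := v0.pos
    set σ : Fin n → ℝ := fun v => if v ∈ S then t else -s with hσ
    set y : Fin n × Fin k → ℝ := fun p => σ p.1 * x p.2 with hy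
    have hσS : ∀ v ∈ S, σ v = t := fun v hv => by rw [hσ]; simp only [if_pos hv]
    have hσSc : ∀ v ∈ Sᶜ, σ v = -s := fun v hv => by
      rw [hσ]; simp only [if_neg (Finset.mem_compl.mp hv)]
    have hσsum : ∑ v, σ v = 0 := by
      have e1 : ∑ v ∈ S, σ v = ∑ _v ∈ S, t := Finset.sum_congr rfl hσS
      have e2 : ∑ v ∈ Sᶜ, σ v = ∑ _v ∈ Sᶜ, (-s) := Finset.sum_congr rfl hσSc
      rw [← Finset.sum_add_sum_compl S, e1, e2, Finset.sum_const, Finset.sum_const,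
        nsmul_eq_mul, nsmul_eq_mul, ← hs, ← ht]
      ring
    have hσsq : ∑ v, σ v ^ 2 = s * t ^ 2 + t * s ^ 2 := by
      have e1 : ∑ v ∈ S, σ v ^ 2 = ∑ _v ∈ S, t ^ 2 :=
        Finset.sum_congr rfl fun v hv => by rw [hσS v hv]
      have e2 : ∑ v ∈ Sᶜ, σ v ^ 2 = ∑ _v ∈ Sᶜ, s ^ 2 :=
        Finset.sum_congr rfl fun v hv => by rw [hσSc v hv]; ring
      rw [← Finset.sum_add_sum_compl S, e1, e2, Finset.sum_const, Finset.sum_const,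
        nsmul_eq_mul, nsmul_eq_mul, ← hs, ← ht]
    -- spectral lower bound
    have key1 : lam k * (y ⬝ᵥ y) ≤ y ⬝ᵥ (mwLap n k W *ᵥ y) := by
      rw [hLW]
      refine mw_spectral_bound _ _ U hU
        (univ.filter (fun p => ((finProdFinEquiv p : Fin (n * k)) : ℕ) < k)) ?_ y ?_
      · intro p hp
        have hp' : ¬ ((finProdFinEquiv p : ℕ) < k) := by simpa using hp
        have hk1 : k ≤ (finProdFinEquiv p : ℕ) := not_lt.mp hp'
        exact hlam (Set.mem_Iio.mpr (lt_of_le_of_lt hk1 (finProdFinEquiv p).2))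
          (Set.mem_Iio.mpr (finProdFinEquiv p).2) hk1
      · intro p hp
        have hp' : ((finProdFinEquiv p : ℕ) : ℕ) < k := by simpa using hp
        obtain ⟨g, hg⟩ := mw_columns_constant n k d W hsym hreg lam hlam hzero hlk
          U hU hLW hn0 p hp'
        have h8 : (Uᵀ *ᵥ y) p = ∑ v, ∑ i, g i * (σ v * x i) := by
          simp only [mulVec, dotProduct, Matrix.transpose_apply, Fintype.sum_prod_type, hy]
          exact Finset.sum_congr rfl fun v _ => Finset.sum_congr rfl fun i _ => by
            rw [hg (v, i)]
        have h9 : ∑ v, ∑ i, g i * (σ v * x i) = (∑ v, σ v) * (∑ i, g i * x i) := by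
          rw [Finset.sum_mul]
          refine Finset.sum_congr rfl fun v _ => ?_
          rw [Finset.mul_sum]
          exact Finset.sum_congr rfl fun i _ => by ring
        rw [h8, h9, hσsum, zero_mul]
    -- edge splitting quantities
    set A1 : ℝ := ∑ v ∈ S, ∑ u ∈ S, Q v u with hA1def
    set B : ℝ := ∑ v ∈ S, ∑ u ∈ Sᶜ, Q v u with hBdef
    set B' : ℝ := ∑ v ∈ Sᶜ, ∑ u ∈ S, Q v u with hB'def
    set A2 : ℝ := ∑ v ∈ Sᶜ, ∑ u ∈ Sᶜ, Q v u with hA2def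
    have hBq : B = q := hqexp.symm
    have hB' : B' = B := by
      rw [hB'def, Finset.sum_comm, hBdef]
      exact Finset.sum_congr rfl fun v _ => Finset.sum_congr rfl fun u _ => hQsym u v
    have hA1 : A1 + B = d * s * X := by
      have h10 : ∀ v ∈ S, (∑ u ∈ S, Q v u) + (∑ u ∈ Sᶜ, Q v u) = d * X := fun v _ => by
        rw [Finset.sum_add_sum_compl]; exact hrowsum v
      rw [hA1def, hBdef, ← Finset.sum_add_distrib, Finset.sum_congr rfl h10,
        Finset.sum_const, nsmul_eq_mul, ← hs]
      ring
    have hA2 : A2 + B' = d * t * X := by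
      have h10 : ∀ v ∈ Sᶜ, (∑ u ∈ Sᶜ, Q v u) + (∑ u ∈ S, Q v u) = d * X := fun v _ => by
        rw [add_comm, Finset.sum_add_sum_compl]; exact hrowsum v
      rw [hA2def, hB'def, ← Finset.sum_add_distrib, Finset.sum_congr rfl h10,
        Finset.sum_const, nsmul_eq_mul, ← ht]
      ring
    have hSS : ∑ v, ∑ u, σ v * σ u * Q v u
        = t ^ 2 * A1 - s * t * B - s * t * B' + s ^ 2 * A2 := by
      have inner : ∀ v, ∑ u, σ v * σ u * Q v u
          = σ v * t * (∑ u ∈ S, Q v u) - σ v * s * (∑ u ∈ Sᶜ, Q v u) := by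
        intro v
        rw [← Finset.sum_add_sum_compl S (fun u => σ v * σ u * Q v u)]
        have i1 : ∑ u ∈ S, σ v * σ u * Q v u = σ v * t * ∑ u ∈ S, Q v u := by
          rw [Finset.mul_sum]
          exact Finset.sum_congr rfl fun u hu => by rw [hσS u hu]
        have i2 : ∑ u ∈ Sᶜ, σ v * σ u * Q v u = -(σ v * s * ∑ u ∈ Sᶜ, Q v u) := by
          have h11 : ∀ u ∈ Sᶜ, σ v * σ u * Q v u = -(σ v * s * Q v u) := fun u hu => by
            rw [hσSc u hu]; ring
          rw [Finset.sum_congr rfl h11, Finset.sum_neg_distrib, ← Finset.mul_sum]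
        rw [i1, i2]; ring
      rw [Finset.sum_congr rfl (fun v _ => inner v), ← Finset.sum_add_sum_compl S]
      have o1 : ∑ v ∈ S, (σ v * t * (∑ u ∈ S, Q v u) - σ v * s * (∑ u ∈ Sᶜ, Q v u))
          = t ^ 2 * A1 - s * t * B := by
        have h12 : ∀ v ∈ S, σ v * t * (∑ u ∈ S, Q v u) - σ v * s * (∑ u ∈ Sᶜ, Q v u)
            = t ^ 2 * (∑ u ∈ S, Q v u) - s * t * (∑ u ∈ Sᶜ, Q v u) := fun v hv => by
          rw [hσS v hv]; ring
        rw [Finset.sum_congr rfl h12, Finset.sum_sub_distrib, ← Finset.mul_sum,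
          ← Finset.mul_sum, hA1def, hBdef]
      have o2 : ∑ v ∈ Sᶜ, (σ v * t * (∑ u ∈ S, Q v u) - σ v * s * (∑ u ∈ Sᶜ, Q v u))
          = -(s * t) * B' + s ^ 2 * A2 := by
        have h12 : ∀ v ∈ Sᶜ, σ v * t * (∑ u ∈ S, Q v u) - σ v * s * (∑ u ∈ Sᶜ, Q v u)
            = -(s * t) * (∑ u ∈ S, Q v u) + s ^ 2 * (∑ u ∈ Sᶜ, Q v u) := fun v hv => by
          rw [hσSc v hv]; ring
        rw [Finset.sum_congr rfl h12, Finset.sum_add_distrib, ← Finset.mul_sum,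
          ← Finset.mul_sum, hB'def, hA2def]
      rw [o1, o2]; ring
    have key2 : y ⬝ᵥ (mwLap n k W *ᵥ y) = (s + t) ^ 2 * q := by
      simp only [hQdef] at hSS
      have hXx : x ⬝ᵥ x = X := rfl
      rw [hy, mw_quad_formula n k d W hreg σ x, hσsq, hSS, hXx]
      have e1 : A1 = d * s * X - q := by
        rw [hBq] at hA1; linarith
      have e2 : A2 = d * t * X - q := by
        rw [hB', hBq] at hA2; linarith
      rw [e1, e2, hB', hBq]; ring
    have key3 : y ⬝ᵥ y = (s * t ^ 2 + t * s ^ 2) * X := by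
      rw [hy]
      simp only [dotProduct, Fintype.sum_prod_type]
      rw [← hσsq, Finset.sum_mul]
      refine Finset.sum_congr rfl fun v _ => ?_
      have hXx : (X : ℝ) = ∑ i, x i * x i := rfl
      rw [hXx, Finset.mul_sum]
      exact Finset.sum_congr rfl fun i _ => by ring
    have bigkey : lam k * ((s * t ^ 2 + t * s ^ 2) * X) ≤ (s + t) ^ 2 * q := by
      rw [← key2, ← key3]; exact key1
    have hpos' : 0 < s + t := by linarith
    have step1 : lam k * (s * t) * X ≤ (s + t) * q := by
      have hl : (s + t) * (lam k * (s * t) * X) ≤ (s + t) * ((s + t) * q) := by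
        calc (s + t) * (lam k * (s * t) * X) = lam k * ((s * t ^ 2 + t * s ^ 2) * X) := by
              ring
        _ ≤ (s + t) ^ 2 * q := bigkey
        _ = (s + t) * ((s + t) * q) := by ring
      exact le_of_mul_le_mul_left hl hpos'
    rw [sub_nonneg, le_inv_mul_iff₀ hc0]
    have hdne : d ≠ 0 := ne_of_gt hd
    have hred : d * min s t * (lam k / (2 * d) * X) = lam k * min s t * X / 2 := by
      field_simp
    rw [hred]
    exact mw_final_arith (lam k) X s t (min s t) q hX0 hlk.le hs0 ht0
      (mw_min_arith s t hs0 ht0) step1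
end
end

section
/- Let G be an r-regular finite simple graph on n vertices, and let (G,W) be a matrix-weighted graph on G whose every weight matrix W(u,v) (for u adjacent to v) is a k×k orthogonal projection of rank ℓ, and which is d-regular with d = rℓ/k. Let μ_1 ≥ … ≥ μ_{nk} be the adjacency eigenvalues of (G,W) and let μ_2(A_G) be the second-largest adjacency eigenvalue of the unweighted graph G. Then μ_{k+1}(A_W) ≥ (ℓ/k)·μ_2(A_G). -/
open Matrix Finset

noncomputable section

set_option maxHeartbeats 1600000 in
/-- Alon–Boppana-type lower bound for matrix-weighted graphs: if `G` is an
`r`-regular graph whose matrix weights on edges are rank-`ℓ` orthogonal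
projections and the matrix weighting is `d`-regular with `d = rℓ/k`, then
`μ_{k+1}(A_W) ≥ (ℓ/k) μ_2(A_G)`.  Here `mu` (resp. `nu`) enumerates the
eigenvalues of the matrix-weighted adjacency matrix `A_W` (resp. of the 0–1
adjacency matrix `A_G` of `G`) in decreasing order (0-indexed), witnessed by
orthogonal spectral decompositions. -/
theorem matrix_weighted_alon_boppana_comparison
    (n k r ℓ : ℕ) (hn : 2 ≤ n) (hk : 0 < k)
    (G : SimpleGraph (Fin n)) [DecidableRel G.Adj]
    (hGreg : G.IsRegularOfDegree r)
    (W : Fin n → Fin n → Matrix (Fin k) (Fin k) ℝ)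
    (hpsd : ∀ u v, (W u v).PosSemidef)
    (hsym : ∀ u v, W u v = W v u)
    (h0 : ∀ u v, ¬ G.Adj u v → W u v = 0)
    (hproj : ∀ u v, G.Adj u v → W u v * W u v = W u v)
    (hrank : ∀ u v, G.Adj u v → (W u v).trace = (ℓ : ℝ))
    (hdreg : ∀ v : Fin n, ∑ u, W u v =
      ((r : ℝ) * ℓ / k) • (1 : Matrix (Fin k) (Fin k) ℝ))
    (mu : ℕ → ℝ) (hmu : AntitoneOn mu (Set.Iio (n * k)))
    (U : Matrix (Fin n × Fin k) (Fin n × Fin k) ℝ) (hU : U * Uᵀ = 1)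
    (hAW : mwAdj n k W =
      U * Matrix.diagonal (fun p => mu (finProdFinEquiv p)) * Uᵀ)
    (nu : ℕ → ℝ) (hnu : AntitoneOn nu (Set.Iio n))
    (Ug : Matrix (Fin n) (Fin n) ℝ) (hUg : Ug * Ugᵀ = 1)
    (hAG : G.adjMatrix ℝ = Ug * Matrix.diagonal (fun v : Fin n => nu v) * Ugᵀ) :
    ((ℓ : ℝ) / k) * nu 1 ≤ mu k := by
  classical
  have hk' : (0:ℝ) < (k:ℝ) := by exact_mod_cast hk
  have hn0 : 0 < n := by omega
  have hkn : k < n * k := by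
    have := (Nat.mul_lt_mul_right hk).mpr (show 1 < n by omega)
    simpa using this
  have hUo : Uᵀ * U = 1 := mul_eq_one_comm.mp hU
  have hUgo : Ugᵀ * Ug = 1 := mul_eq_one_comm.mp hUg
  set A := G.adjMatrix ℝ with hA
  set v0 : Fin n := ⟨0, by omega⟩ with hv0
  set v1 : Fin n := ⟨1, by omega⟩ with hv1
  have hv01 : v0 ≠ v1 := by simp [hv0, hv1, Fin.ext_iff]
  have hortho : ∀ i j : Fin n, (∑ v, Ug v i * Ug v j) = if i = j then 1 else 0 := by
    intro i j
    have h := congrFun (congrFun hUgo i) j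
    simpa [Matrix.mul_apply, Matrix.transpose_apply, Matrix.one_apply] using h
  have hDg : Ugᵀ * A * Ug = Matrix.diagonal (fun v : Fin n => nu v) := by
    rw [hAG]
    simp only [Matrix.mul_assoc]
    rw [hUgo, Matrix.mul_one, ← Matrix.mul_assoc, hUgo, Matrix.one_mul]
  have hP : ∀ i j : Fin n, (∑ v, ∑ w, Ug v i * (A v w * Ug w j))
      = if i = j then nu (i:ℕ) else 0 := by
    intro i j
    have h := congrFun (congrFun hDg i) j
    simp only [Matrix.mul_apply, Matrix.transpose_apply, Matrix.diagonal_apply] at h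
    rw [← h, Finset.sum_comm]
    refine Finset.sum_congr rfl fun w _ => ?_
    rw [Finset.sum_mul]
    exact Finset.sum_congr rfl fun v _ => by ring
  have hPP : ∀ i j : Fin n, (∑ v, Ug v i * ∑ w, A v w * Ug w j)
      = if i = j then nu (i:ℕ) else 0 := by
    intro i j
    rw [← hP i j]
    exact Finset.sum_congr rfl fun v _ => by rw [Finset.mul_sum]
  obtain ⟨a, b, hab, habs⟩ : ∃ a b : ℝ, 0 < a^2 + b^2 ∧
      a * (∑ v, Ug v v0) + b * (∑ v, Ug v v1) = 0 := by
    by_cases h : (∑ v, Ug v v0) = 0 ∧ (∑ v, Ug v v1) = 0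
    · exact ⟨0, 1, by norm_num, by simp [h.1, h.2]⟩
    · refine ⟨∑ v, Ug v v1, -(∑ v, Ug v v0), ?_, by ring⟩
      rcases not_and_or.mp h with h' | h'
      · have h1 := pow_two_pos_of_ne_zero h'
        nlinarith [sq_nonneg (∑ v, Ug v v1)]
      · have h1 := pow_two_pos_of_ne_zero h'
        nlinarith [sq_nonneg (∑ v, Ug v v0)]
  set x : Fin n → ℝ := fun v => a * Ug v v0 + b * Ug v v1 with hxd
  have hxp : ∀ v, x v = a * Ug v v0 + b * Ug v v1 := fun v => rfl
  set X : ℝ := a^2 + b^2 with hXd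
  have hxsum : ∑ v, x v = 0 := by
    simp only [hxp, Finset.sum_add_distrib, ← Finset.mul_sum]
    exact habs
  have hxx : ∑ v, x v * x v = X := by
    have h1 : ∀ v, x v * x v = a*a*(Ug v v0 * Ug v v0)
        + (2*(a*b))*(Ug v v0 * Ug v v1) + b*b*(Ug v v1 * Ug v v1) :=
      fun v => by rw [hxp]; ring
    rw [Finset.sum_congr rfl fun v _ => h1 v]
    simp only [Finset.sum_add_distrib, ← Finset.mul_sum, hortho]
    simp [hv01, hXd]
    ring
  have hxAx : ∑ v, x v * (∑ w, A v w * x w) = a^2 * nu 0 + b^2 * nu 1 := by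
    have h1 : ∀ v, x v * (∑ w, A v w * x w) = ∑ w, x v * (A v w * x w) :=
      fun v => by rw [Finset.mul_sum]
    rw [Finset.sum_congr rfl fun v _ => h1 v]
    have h2 : ∀ v w, x v * (A v w * x w) =
        a*a*(Ug v v0 * (A v w * Ug w v0)) + a*b*(Ug v v0 * (A v w * Ug w v1))
        + a*b*(Ug v v1 * (A v w * Ug w v0)) + b*b*(Ug v v1 * (A v w * Ug w v1)) :=
      fun v w => by rw [hxp v, hxp w]; ring
    rw [Finset.sum_congr rfl fun v _ => Finset.sum_congr rfl fun w _ => h2 v w]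
    simp only [Finset.sum_add_distrib, ← Finset.mul_sum]
    rw [hPP v0 v0, hPP v0 v1, hPP v1 v0, hPP v1 v1]
    have hc0 : ((v0 : Fin n) : ℕ) = 0 := rfl
    have hc1 : ((v1 : Fin n) : ℕ) = 1 := rfl
    simp [hv01, hv01.symm, hc0, hc1]
    ring
  have hnu01 : nu 1 ≤ nu 0 :=
    hnu (Set.mem_Iio.mpr (by omega)) (Set.mem_Iio.mpr (by omega)) (by omega)
  have hxA_ge : X * nu 1 ≤ ∑ v, x v * (∑ w, A v w * x w) := by
    rw [hxAx, hXd]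
    nlinarith [sq_nonneg a, hnu01]
  have hcol1 : ∑ v, Ug v v1 * (∑ w, A v w * Ug w v1) = nu 1 := by
    rw [hPP v1 v1]
    simp
    rfl
  have hnu1r : nu 1 ≤ (r:ℝ) := by
    have hpsdL := (SimpleGraph.posSemidef_lapMatrix ℝ G).dotProduct_mulVec_nonneg (fun v => Ug v v1)
    have hstar : star (fun v => Ug v v1) = (fun v => Ug v v1) := by
      funext v; simp
    rw [hstar] at hpsdL
    have hq : (fun v => Ug v v1) ⬝ᵥ (G.lapMatrix ℝ *ᵥ (fun v => Ug v v1))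
        = (r:ℝ) - nu 1 := by
      rw [SimpleGraph.lapMatrix, Matrix.sub_mulVec, dotProduct_sub]
      have hdeg : (fun v => Ug v v1) ⬝ᵥ (G.degMatrix ℝ *ᵥ (fun v => Ug v v1))
          = (r:ℝ) := by
        simp only [SimpleGraph.degMatrix, dotProduct, Matrix.mulVec_diagonal]
        have h1 : ∀ v : Fin n, Ug v v1 * ((G.degree v : ℝ) * Ug v v1)
            = (r:ℝ) * (Ug v v1 * Ug v v1) := by
          intro v; rw [hGreg v]; ring
        rw [Finset.sum_congr rfl fun v _ => h1 v, ← Finset.mul_sum, hortho]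
        simp
      have hadj : (fun v => Ug v v1) ⬝ᵥ (A *ᵥ (fun v => Ug v v1)) = nu 1 := by
        simp only [dotProduct, Matrix.mulVec]
        exact hcol1
      rw [hdeg, hadj]
    rw [hq] at hpsdL
    linarith
  set d : ℝ := (r : ℝ) * ℓ / k with hdd
  set t : ℝ := (ℓ : ℝ) / k * nu 1 with htd
  have hdt : t ≤ d := by
    calc t = (ℓ:ℝ)/k * nu 1 := rfl
      _ ≤ (ℓ:ℝ)/k * r := mul_le_mul_of_nonneg_left hnu1r (by positivity)
      _ = d := by rw [hdd]; ring
  have hsum1 : ∀ (v : Fin n) (j m : Fin k), (∑ u, W u v j m)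
      = if j = m then d else 0 := by
    intro v j m
    have h := congrFun (congrFun (hdreg v) j) m
    simpa [Matrix.sum_apply, Matrix.smul_apply, Matrix.one_apply, smul_eq_mul,
      mul_ite, mul_one, mul_zero] using h
  have hsum2 : ∀ (u : Fin n) (j m : Fin k), (∑ v, W u v j m)
      = if j = m then d else 0 := by
    intro u j m
    rw [← hsum1 u j m]
    exact Finset.sum_congr rfl fun v _ => by rw [hsym u v]
  set Qd : Fin k → ℝ := fun m => ∑ u, x u * (∑ v, W u v m m * x v) with hQdd
  have hQdp : ∀ m, Qd m = ∑ u, x u * (∑ v, W u v m m * x v) := fun m => rfl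
  have htr : ∀ u v, (∑ m, W u v m m) = (ℓ:ℝ) * A u v := by
    intro u v
    by_cases h : G.Adj u v
    · have h1 := hrank u v h
      rw [hA]
      simp only [SimpleGraph.adjMatrix_apply, if_pos h, mul_one]
      simpa [Matrix.trace, Matrix.diag] using h1
    · rw [hA]
      simp [SimpleGraph.adjMatrix_apply, h, h0 u v h]
  have hTsum : ∑ m, Qd m = (ℓ:ℝ) * ∑ v, x v * (∑ w, A v w * x w) := by
    simp only [hQdp]
    rw [Finset.sum_comm]
    rw [Finset.mul_sum]
    refine Finset.sum_congr rfl fun u _ => ?_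
    -- ∑ m, x u * ∑ v, W u v m m * x v = ℓ * (x u * ∑ w, A u w * x w)
    simp only [Finset.mul_sum]
    rw [Finset.sum_comm]
    -- ∑ v, ∑ m, x u * (W u v m m * x v) = ∑ w, ℓ * (x u * (A u w * x w))
    refine Finset.sum_congr rfl fun v _ => ?_
    have h1 : ∑ m, x u * (W u v m m * x v) = x u * ((∑ m, W u v m m) * x v) := by
      rw [Finset.sum_mul, Finset.mul_sum]
    rw [h1, htr u v]
    ring
  have hTlow : (ℓ:ℝ) * (X * nu 1) ≤ ∑ m, Qd m := by
    rw [hTsum]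
    exact mul_le_mul_of_nonneg_left hxA_ge (Nat.cast_nonneg ℓ)
  obtain ⟨i, hi⟩ : ∃ i : Fin k, (∑ m, Qd m) ≤ (k:ℝ) * Qd i := by
    by_contra hcon
    push_neg at hcon
    have hne : (Finset.univ : Finset (Fin k)).Nonempty := ⟨⟨0, hk⟩, Finset.mem_univ _⟩
    have h2 : ∑ m, Qd m < ∑ _m : Fin k, (∑ m', Qd m') / k :=
      Finset.sum_lt_sum_of_nonempty hne fun m _ => by
        rw [lt_div_iff₀ hk']
        have := hcon m
        nlinarith
    rw [Finset.sum_const, Finset.card_univ, Fintype.card_fin, nsmul_eq_mul] at h2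
    rw [mul_div_cancel₀ _ (ne_of_gt hk')] at h2
    exact lt_irrefl _ h2
  have hQt : t * X ≤ Qd i := by
    rw [htd]
    rw [show (ℓ:ℝ)/k * nu 1 * X = ((ℓ:ℝ) * (X * nu 1))/k from by ring]
    rw [div_le_iff₀ hk']
    nlinarith [hTlow, hi]
  -- the test vector family
  set zf : ((Fin k → ℝ) × ℝ) → (Fin n × Fin k → ℝ) :=
    fun cs p => cs.1 p.2 + cs.2 * (if p.2 = i then x p.1 else 0) with hzf
  have hjlt : ∀ j : Fin k, (j : ℕ) < n * k := fun j => lt_trans j.isLt hkn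
  have hzadd : ∀ cs cs', zf (cs + cs') = zf cs + zf cs' := by
    intro cs cs'
    funext p
    simp only [hzf, Prod.fst_add, Prod.snd_add, Pi.add_apply]
    ring
  have hzsmul : ∀ (r' : ℝ) cs, zf (r' • cs) = r' • zf cs := by
    intro r' cs
    funext p
    simp only [hzf, Prod.smul_fst, Prod.smul_snd, Pi.smul_apply, smul_eq_mul]
    ring
  obtain ⟨⟨c, s⟩, hcsne, hcszero⟩ : ∃ cs : (Fin k → ℝ) × ℝ, cs ≠ 0 ∧
      ∀ j : Fin k, (Uᵀ *ᵥ zf cs) (finProdFinEquiv.symm ⟨(j:ℕ), hjlt j⟩) = 0 := by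
    set F : ((Fin k → ℝ) × ℝ) →ₗ[ℝ] (Fin k → ℝ) :=
      { toFun := fun cs j => (Uᵀ *ᵥ zf cs) (finProdFinEquiv.symm ⟨(j:ℕ), hjlt j⟩),
        map_add' := by
          intro cs cs'
          funext j
          simp only [hzadd, Matrix.mulVec_add, Pi.add_apply],
        map_smul' := by
          intro r' cs
          funext j
          simp only [hzsmul, Matrix.mulVec_smul, Pi.smul_apply, smul_eq_mul,
            RingHom.id_apply] } with hF
    have hnotinj : ¬ Function.Injective F := by
      intro hinj
      have h1 := LinearMap.finrank_le_finrank_of_injective hinj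
      rw [Module.finrank_prod, Module.finrank_self,
        Module.finrank_fintype_fun_eq_card] at h1
      simp only [Fintype.card_fin] at h1
      omega
    have hker : LinearMap.ker F ≠ ⊥ := fun h => hnotinj (LinearMap.ker_eq_bot.mp h)
    obtain ⟨cs, hmem, hne⟩ := (Submodule.ne_bot_iff _).mp hker
    refine ⟨cs, hne, fun j => ?_⟩
    have h2 := congrFun (LinearMap.mem_ker.mp hmem) j
    simpa [hF] using h2
  have hcs : c ≠ 0 ∨ s ≠ 0 := by
    by_contra h
    push_neg at h
    exact hcsne (Prod.mk_eq_zero.mpr ⟨h.1, h.2⟩)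
  set z : Fin n × Fin k → ℝ := zf (c, s) with hzd
  have hzp : ∀ p : Fin n × Fin k, z p = c p.2 + s * (if p.2 = i then x p.1 else 0) :=
    fun p => rfl
  have hy0 : ∀ p : Fin n × Fin k, ((finProdFinEquiv p : Fin (n*k)) : ℕ) < k →
      (Uᵀ *ᵥ z) p = 0 := by
    intro p hp
    have h2 := hcszero ⟨((finProdFinEquiv p : Fin (n*k)) : ℕ), hp⟩
    have h3 : finProdFinEquiv.symm
        ⟨((⟨((finProdFinEquiv p : Fin (n*k)) : ℕ), hp⟩ : Fin k) : ℕ),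
          hjlt ⟨((finProdFinEquiv p : Fin (n*k)) : ℕ), hp⟩⟩ = p := by
      rw [show (⟨((⟨((finProdFinEquiv p : Fin (n*k)) : ℕ), hp⟩ : Fin k) : ℕ),
          hjlt ⟨((finProdFinEquiv p : Fin (n*k)) : ℕ), hp⟩⟩ : Fin (n*k))
          = finProdFinEquiv p from Fin.ext rfl]
      exact Equiv.symm_apply_apply _ _
    rw [h3] at h2
    exact h2
  -- pointwise formula for (A_W z)
  have hAz : ∀ p : Fin n × Fin k, (mwAdj n k W *ᵥ z) p
      = d * c p.2 + s * ∑ v, W p.1 v p.2 i * x v := by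
    rintro ⟨u, j⟩
    show ∑ q : Fin n × Fin k, W u q.1 j q.2 * z q = _
    rw [Fintype.sum_prod_type]
    have h1 : ∀ (v : Fin n) (m : Fin k), W u v j m * z (v, m)
        = W u v j m * c m + (if m = i then W u v j m * (s * x v) else 0) := by
      intro v m
      rw [hzp]
      by_cases h : m = i <;> simp [h] <;> ring
    rw [Finset.sum_congr rfl fun v _ => Finset.sum_congr rfl fun m _ => h1 v m]
    simp only [Finset.sum_add_distrib]
    congr 1
    · rw [Finset.sum_comm]
      have h2 : ∀ m : Fin k, ∑ v, W u v j m * c m = (if j = m then d else 0) * c m :=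
        fun m => by rw [← Finset.sum_mul, hsum2 u j m]
      rw [Finset.sum_congr rfl fun m _ => h2 m]
      simp
    · rw [Finset.mul_sum]
      refine Finset.sum_congr rfl fun v _ => ?_
      rw [Finset.sum_ite_eq' Finset.univ i (fun m => W u v j m * (s * x v))]
      simp
      ring
  have hRsum : ∀ j : Fin k, ∑ u, (∑ v, W u v j i * x v) = 0 := by
    intro j
    rw [Finset.sum_comm]
    have h2 : ∀ v, ∑ u, W u v j i * x v = (if j = i then d else 0) * x v :=
      fun v => by rw [← Finset.sum_mul, hsum1 v j i]
    rw [Finset.sum_congr rfl fun v _ => h2 v, ← Finset.mul_sum, hxsum, mul_zero]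
  -- the quadratic form of A_W at z
  have hkey : ∑ p : Fin n × Fin k, z p * (mwAdj n k W *ᵥ z) p
      = (n:ℝ) * (d * ∑ j, c j * c j) + s^2 * Qd i := by
    rw [Fintype.sum_prod_type]
    have h1 : ∀ u j, z (u, j) * (mwAdj n k W *ᵥ z) (u, j)
        = d * (c j * c j) + c j * (s * ∑ v, W u v j i * x v)
          + (s * d) * ((if j = i then x u else 0) * c j)
          + s * ((if j = i then x u else 0) * (s * ∑ v, W u v j i * x v)) := by
      intro u j
      rw [hAz (u, j), hzp]
      ring
    rw [Finset.sum_congr rfl fun u _ => Finset.sum_congr rfl fun j _ => h1 u j]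
    simp only [Finset.sum_add_distrib]
    have hT1 : ∑ _u : Fin n, ∑ j : Fin k, d * (c j * c j)
        = (n:ℝ) * (d * ∑ j, c j * c j) := by
      rw [Finset.sum_const, Finset.card_univ, Fintype.card_fin, nsmul_eq_mul,
        ← Finset.mul_sum]
    have hT2 : ∑ u : Fin n, ∑ j : Fin k, c j * (s * ∑ v, W u v j i * x v) = 0 := by
      rw [Finset.sum_comm]
      refine Finset.sum_eq_zero fun j _ => ?_
      have h3 : ∑ u : Fin n, c j * (s * ∑ v, W u v j i * x v)
          = (c j * s) * ∑ u, ∑ v, W u v j i * x v := by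
        rw [Finset.mul_sum]
        exact Finset.sum_congr rfl fun u _ => by ring
      rw [h3, hRsum j, mul_zero]
    have hT3 : ∑ u : Fin n, ∑ j : Fin k,
        (s * d) * ((if j = i then x u else 0) * c j) = 0 := by
      have h3 : ∀ u, ∑ j : Fin k, (s * d) * ((if j = i then x u else 0) * c j)
          = (s * d * c i) * x u := by
        intro u
        rw [show (fun j => (s * d) * ((if j = i then x u else 0) * c j))
            = fun j => (if j = i then (s * d) * (x u * c j) else 0) from
          funext fun j => by by_cases h : j = i <;> simp [h]]
        rw [Finset.sum_ite_eq' Finset.univ i (fun j => (s * d) * (x u * c j))]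
        simp
        ring
      rw [Finset.sum_congr rfl fun u _ => h3 u, ← Finset.mul_sum, hxsum, mul_zero]
    have hT4 : ∑ u : Fin n, ∑ j : Fin k,
        s * ((if j = i then x u else 0) * (s * ∑ v, W u v j i * x v))
        = s^2 * Qd i := by
      have h4 : ∀ u, ∑ j : Fin k,
          s * ((if j = i then x u else 0) * (s * ∑ v, W u v j i * x v))
          = (s * s) * (x u * ∑ v, W u v i i * x v) := by
        intro u
        rw [show (fun j => s * ((if j = i then x u else 0) * (s * ∑ v, W u v j i * x v)))
            = fun j => (if j = i then (s * s) * (x u * ∑ v, W u v j i * x v) else 0) from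
          funext fun j => by by_cases h : j = i <;> simp [h] <;> ring]
        rw [Finset.sum_ite_eq' Finset.univ i
          (fun j => (s * s) * (x u * ∑ v, W u v j i * x v))]
        simp
      rw [Finset.sum_congr rfl fun u _ => h4 u, ← Finset.mul_sum]
      have h5 : ∑ u, x u * ∑ v, W u v i i * x v = Qd i := (hQdp i).symm
      rw [h5]
      ring
    rw [hT1, hT2, hT3, hT4]
    ring
  -- the norm of z
  have hzz : ∑ p : Fin n × Fin k, z p * z p
      = (n:ℝ) * (∑ j, c j * c j) + s^2 * X := by
    rw [Fintype.sum_prod_type, Finset.sum_comm]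
    have h1 : ∀ j : Fin k, ∑ v : Fin n, z (v, j) * z (v, j)
        = (n:ℝ) * (c j * c j) + (if j = i then s^2 * X else 0) := by
      intro j
      by_cases h : j = i
      · have h2 : ∀ v, z (v, j) * z (v, j)
            = c j * c j + (2 * (c j * s)) * x v + (s * s) * (x v * x v) := by
          intro v
          rw [hzp]
          simp only [if_pos h]
          ring
        rw [Finset.sum_congr rfl fun v _ => h2 v]
        simp only [Finset.sum_add_distrib, ← Finset.mul_sum, hxsum, hxx]
        rw [Finset.sum_const, Finset.card_univ, Fintype.card_fin, nsmul_eq_mul,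
          if_pos h]
        ring
      · have h2 : ∀ v, z (v, j) * z (v, j) = c j * c j := by
          intro v
          rw [hzp]
          simp [h]
        rw [Finset.sum_congr rfl fun v _ => h2 v]
        rw [Finset.sum_const, Finset.card_univ, Fintype.card_fin, nsmul_eq_mul]
        simp [h]
    rw [Finset.sum_congr rfl fun j _ => h1 j]
    simp only [Finset.sum_add_distrib, ← Finset.mul_sum]
    rw [Finset.sum_ite_eq' Finset.univ i (fun _ => s^2 * X)]
    simp
  -- upper bound via the spectral decomposition of A_W
  have hup : ∑ p : Fin n × Fin k, z p * (mwAdj n k W *ᵥ z) p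
      ≤ mu k * ∑ p : Fin n × Fin k, z p * z p := by
    have e1 : ∑ p : Fin n × Fin k, z p * (mwAdj n k W *ᵥ z) p
        = z ⬝ᵥ (mwAdj n k W *ᵥ z) := rfl
    have e2 : z ⬝ᵥ (mwAdj n k W *ᵥ z)
        = ∑ p : Fin n × Fin k, mu (finProdFinEquiv p) * ((Uᵀ *ᵥ z) p * (Uᵀ *ᵥ z) p) := by
      rw [hAW, ← Matrix.mulVec_mulVec, ← Matrix.mulVec_mulVec,
        Matrix.dotProduct_mulVec, ← Matrix.mulVec_transpose]
      have e3 : (Uᵀ *ᵥ z) ⬝ᵥ ((Matrix.diagonal fun p => mu (finProdFinEquiv p)) *ᵥ (Uᵀ *ᵥ z))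
          = ∑ p : Fin n × Fin k, mu (finProdFinEquiv p) * ((Uᵀ *ᵥ z) p * (Uᵀ *ᵥ z) p) := by
        simp only [dotProduct, Matrix.mulVec_diagonal]
        exact Finset.sum_congr rfl fun p _ => by ring
      exact e3
    have e4 : z ⬝ᵥ z = ∑ p : Fin n × Fin k, (Uᵀ *ᵥ z) p * (Uᵀ *ᵥ z) p := by
      have e5 : ∑ p : Fin n × Fin k, (Uᵀ *ᵥ z) p * (Uᵀ *ᵥ z) p
          = (Uᵀ *ᵥ z) ⬝ᵥ (Uᵀ *ᵥ z) := rfl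
      rw [e5, Matrix.dotProduct_mulVec, ← Matrix.mulVec_transpose,
        Matrix.transpose_transpose, Matrix.mulVec_mulVec, hU, Matrix.one_mulVec]
    have e6 : ∑ p : Fin n × Fin k, mu (finProdFinEquiv p) * ((Uᵀ *ᵥ z) p * (Uᵀ *ᵥ z) p)
        ≤ mu k * ∑ p : Fin n × Fin k, (Uᵀ *ᵥ z) p * (Uᵀ *ᵥ z) p := by
      rw [Finset.mul_sum]
      refine Finset.sum_le_sum fun p _ => ?_
      by_cases hp : ((finProdFinEquiv p : Fin (n*k)) : ℕ) < k
      · rw [hy0 p hp]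
        simp
      · exact mul_le_mul_of_nonneg_right
          (hmu (Set.mem_Iio.mpr hkn) (Set.mem_Iio.mpr (finProdFinEquiv p).isLt)
            (le_of_not_gt hp))
          (mul_self_nonneg _)
    calc ∑ p : Fin n × Fin k, z p * (mwAdj n k W *ᵥ z) p
        = ∑ p : Fin n × Fin k, mu (finProdFinEquiv p) * ((Uᵀ *ᵥ z) p * (Uᵀ *ᵥ z) p) := e2
      _ ≤ mu k * ∑ p : Fin n × Fin k, (Uᵀ *ᵥ z) p * (Uᵀ *ᵥ z) p := e6
      _ = mu k * ∑ p : Fin n × Fin k, z p * z p :=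
          congrArg (fun w => mu k * w) (e4.symm.trans
            (show z ⬝ᵥ z = ∑ p : Fin n × Fin k, z p * z p from rfl))
  -- positivity of the norm of z
  have hc2 : 0 ≤ ∑ j, c j * c j := Finset.sum_nonneg fun j _ => mul_self_nonneg _
  have hZpos : 0 < (n:ℝ) * (∑ j, c j * c j) + s^2 * X := by
    have hn2 : (2:ℝ) ≤ (n:ℝ) := by exact_mod_cast hn
    rcases hcs with hc | hs
    · obtain ⟨j, hj⟩ := Function.ne_iff.mp hc
      have hj' : c j ≠ 0 := by simpa using hj
      have h1 : 0 < c j * c j := mul_self_pos.mpr hj'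
      have h2 : c j * c j ≤ ∑ j', c j' * c j' :=
        Finset.single_le_sum (f := fun j' => c j' * c j')
          (fun j' _ => mul_self_nonneg _) (Finset.mem_univ j)
      nlinarith [sq_nonneg s, hab]
    · have h1 : 0 < s^2 := by positivity
      nlinarith [hab, hc2]
  -- lower bound on the quadratic form
  have hlow : t * ((n:ℝ) * (∑ j, c j * c j) + s^2 * X)
      ≤ ∑ p : Fin n × Fin k, z p * (mwAdj n k W *ᵥ z) p := by
    rw [hkey]
    have h1 : 0 ≤ (n:ℝ) * (∑ j, c j * c j) :=
      mul_nonneg (Nat.cast_nonneg n) hc2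
    nlinarith [mul_nonneg h1 (sub_nonneg.mpr hdt),
      mul_nonneg (sq_nonneg s) (sub_nonneg.mpr hQt)]
  have hfin : t * ((n:ℝ) * (∑ j, c j * c j) + s^2 * X)
      ≤ mu k * ((n:ℝ) * (∑ j, c j * c j) + s^2 * X) := by
    calc t * ((n:ℝ) * (∑ j, c j * c j) + s^2 * X)
        ≤ ∑ p : Fin n × Fin k, z p * (mwAdj n k W *ᵥ z) p := hlow
      _ ≤ mu k * ∑ p : Fin n × Fin k, z p * z p := hup
      _ = mu k * ((n:ℝ) * (∑ j, c j * c j) + s^2 * X) := by rw [hzz]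
  exact (mul_le_mul_iff_of_pos_right hZpos).mp hfin
end
end
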